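/- arXiv:math/0201176 — 3 statements merged into one kernel-verified Lean document; each statement's English description precedes it below -/
import Mathlib

section
/- For the root system of GL_n, let 1 ≤ k ≤ n and m ≥ 1, and consider the reduced expression t_{m e_k} = (s_{k-1} ⋯ s_1 τ s_{n-1} ⋯ s_k)^m. Let x = u_1 τ v_1 u_2 τ v_2 ⋯ u_m τ v_m be a subexpression of it, where each u_i is a subword of s_{k-1} ⋯ s_1 and each v_i is a subword of s_{n-1} ⋯ s_k, and suppose that for some index p, u_p is a proper subword of s_{k-1} ⋯ s_1 (i.e., at least one letter s_i with 1 ≤ i ≤ k-1 is deleted). Then λ(x) ⋠ m e_k (the translation part of x does not satisfy λ(x) ⪯ m e_k). -/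
open scoped Classical

noncomputable section

/-- The coefficient ring `ℤ[q^{1/2}, q^{-1/2}]`, realized as Laurent polynomials
over `ℤ` in the variable `v = q^{1/2}`. -/
abbrev HckA : Type := LaurentPolynomial ℤ

/-- The element `q = v²` of `ℤ[q^{1/2}, q^{-1/2}]`. -/
def qA : HckA := LaurentPolynomial.T 2

/-- The element `Q = q^{-1/2} - q^{1/2}`. -/
def QA : HckA := LaurentPolynomial.T (-1) - LaurentPolynomial.T 1

/-- A root system `(X^* , X_* , R, Ř, Π)` (with `Y = X^*`, `X = X_*`), together with
its finite Weyl group `W0` and its extended affine Weyl group `Wt = X_* ⋊ W0`,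
with the canonical decomposition `g = t (lam g) * emb (fpart g)`. -/
structure AffineWeylSetup (Y X W0 Wt : Type)
    [AddCommGroup Y] [AddCommGroup X] [Group W0] [Group Wt] where
  /-- the perfect pairing `⟨·,·⟩ : X^* × X_* → ℤ` -/
  pair : Y → X → ℤ
  pair_add_left : ∀ a b x, pair (a + b) x = pair a x + pair b x
  pair_add_right : ∀ a x y, pair a (x + y) = pair a x + pair a y
  /-- the finite set of roots `R ⊆ X^*` -/
  R : Finset Y
  /-- the simple roots `Π` -/
  Pi : Finset Y
  Pi_subset : Pi ⊆ R
  /-- the positive roots `R⁺` -/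
  Rpos : Finset Y
  Rpos_subset : Rpos ⊆ R
  pos_or_neg : ∀ α ∈ R, α ∈ Rpos ∨ -α ∈ Rpos
  not_pos_and_neg : ∀ α ∈ R, ¬(α ∈ Rpos ∧ -α ∈ Rpos)
  neg_mem : ∀ α ∈ R, -α ∈ R
  /-- the coroot `ᾰ ∈ X_*` attached to a root `α` -/
  coroot : Y → X
  /-- the action of `W0` on `X_*` -/
  act : W0 → X → X
  act_one : ∀ x, act 1 x = x
  act_mul : ∀ u v x, act (u * v) x = act u (act v x)
  act_add : ∀ u x y, act u (x + y) = act u x + act u y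
  /-- the action of `W0` on `X^*` -/
  actY : W0 → Y → Y
  actY_one : ∀ a, actY 1 a = a
  actY_mul : ∀ u v a, actY (u * v) a = actY u (actY v a)
  act_pair : ∀ u a x, pair (actY u a) (act u x) = pair a x
  actY_root : ∀ u, ∀ α ∈ R, actY u α ∈ R
  /-- the reflection `s_α ∈ W0` attached to a root `α` -/
  sref : Y → W0
  sref_act : ∀ α ∈ R, ∀ x, act (sref α) x = x - pair α x • coroot α
  sref_sq : ∀ α ∈ R, sref α * sref α = 1
  w0_gen : ∀ u : W0, u ∈ Subgroup.closure (sref '' ↑Pi)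
  /-- the translation embedding `X_* → W̃`, `x ↦ t_x` -/
  t : X → Wt
  t_zero : t 0 = 1
  t_add : ∀ x y, t (x + y) = t x * t y
  /-- the embedding `W0 → W̃` -/
  emb : W0 →* Wt
  conj_t : ∀ u x, emb u * t x = t (act u x) * emb u
  /-- the translation part `λ(g)` of `g = t_{λ(g)} w` -/
  lam : Wt → X
  /-- the finite part `w` of `g = t_{λ(g)} w` -/
  fpart : Wt → W0
  decomp : ∀ g, g = t (lam g) * emb (fpart g)
  lam_spec : ∀ x u, lam (t x * emb u) = x
  fpart_spec : ∀ x u, fpart (t x * emb u) = u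

namespace AffineWeylSetup

variable {Y X W0 Wt : Type} [AddCommGroup Y] [AddCommGroup X] [Group W0] [Group Wt]
variable (S : AffineWeylSetup Y X W0 Wt)

/-- `λ ∈ X_*` is dominant if `⟨α, λ⟩ ≥ 0` for all simple roots `α`. -/
def Dominant (x : X) : Prop := ∀ α ∈ S.Pi, 0 ≤ S.pair α x

/-- `λ ∈ X_*` is antidominant if `⟨α, λ⟩ ≤ 0` for all simple roots `α`. -/
def Antidominant (x : X) : Prop := ∀ α ∈ S.Pi, S.pair α x ≤ 0

/-- `λ ∈ X_*` is minuscule if `⟨α, λ⟩ ∈ {0, 1, -1}` for every root `α`. -/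
def Minuscule (x : X) : Prop :=
  ∀ α ∈ S.R, S.pair α x = 0 ∨ S.pair α x = 1 ∨ S.pair α x = -1

/-- The partial order `⪯` on `X_*`: `x ⪯ y` iff `y - x` is a nonnegative integral
combination of simple coroots. -/
def preceq (x y : X) : Prop :=
  ∃ c : Y → ℕ, y - x = ∑ α ∈ S.Pi, (c α : ℤ) • S.coroot α

/-- The partial order `⪯` on `X^*`: `a ⪯ b` iff `b - a` is a nonnegative integral
combination of simple roots. -/
def preceqY (a b : Y) : Prop :=
  ∃ c : Y → ℕ, b - a = ∑ α ∈ S.Pi, (c α : ℤ) • α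

/-- `Π_m`: the set of `⪯`-minimal roots. -/
def Pim : Set Y := {β | β ∈ S.R ∧ ∀ γ ∈ S.R, S.preceqY γ β → γ = β}

/-- The length function on the extended affine Weyl group:
`l(t_x w) = Σ_{α ∈ R⁺, w⁻¹ α ∈ R⁻} |⟨α,x⟩ - 1| + Σ_{α ∈ R⁺, w⁻¹ α ∈ R⁺} |⟨α,x⟩|`. -/
def len (g : Wt) : ℕ :=
  (∑ α ∈ S.Rpos.filter (fun α => S.actY (S.fpart g)⁻¹ α ∉ S.Rpos),
      (S.pair α (S.lam g) - 1).natAbs)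
  + ∑ α ∈ S.Rpos.filter (fun α => S.actY (S.fpart g)⁻¹ α ∈ S.Rpos),
      (S.pair α (S.lam g)).natAbs

/-- The set `S_a` of simple affine reflections:
`{s_α : α ∈ Π} ∪ {t_{-ᾰ} s_α : α ∈ Π_m}`. -/
def Sa : Set Wt :=
  ((fun α => S.emb (S.sref α)) '' ↑S.Pi) ∪
    ((fun β => S.t (-(S.coroot β)) * S.emb (S.sref β)) '' S.Pim)

/-- `Ω`: the length-zero elements of the extended affine Weyl group. -/
def Omega : Set Wt := {g | S.len g = 0}

/-- The affine Weyl group `W_a`, generated by `S_a`. -/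
def Wa : Subgroup Wt := Subgroup.closure S.Sa

/-- `IsReducedWord S L τ g` says that `g = s_1 ⋯ s_r τ` is a reduced expression,
where `L = [s_1, …, s_r]` is a list of elements of `S_a` with `r = l(g)` and `τ ∈ Ω`. -/
def IsReducedWord (L : List Wt) (τ g : Wt) : Prop :=
  (∀ s ∈ L, s ∈ S.Sa) ∧ τ ∈ S.Omega ∧ g = L.prod * τ ∧ L.length = S.len g

/-- The (extended) Bruhat order on `W̃`, via the subword property: `x ≤ y` iff `x` is
obtained from a reduced expression `y = s_1 ⋯ s_r τ` by taking a subword of `s_1 ⋯ s_r`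
(keeping the same `τ ∈ Ω`). -/
def bruhatLE (x y : Wt) : Prop :=
  ∃ L τ, S.IsReducedWord L τ y ∧ ∃ L' : List Wt, L'.Sublist L ∧ x = L'.prod * τ

/-- The right translation part `t(x)` in the decomposition `x = w t_{t(x)}`. -/
def rlam (g : Wt) : X := S.act (S.fpart g)⁻¹ (S.lam g)

/-- The `μ`-admissible set `Adm(μ) = {x : x ≤ t_{w(μ)} for some w ∈ W0}`. -/
def Adm (μ : X) : Set Wt := {x | ∃ w : W0, S.bruhatLE x (S.t (S.act w μ))}

end AffineWeylSetup

/-- The affine Hecke algebra attached to an `AffineWeylSetup`: an algebra `H` over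
`ℤ[q^{1/2}, q^{-1/2}]` with basis `T_w` (`w ∈ W̃`), satisfying the braid relations
`T_g T_{g'} = T_{g g'}` when lengths add, and the quadratic relations
`(T_s + 1)(T_s - q) = 0` for `s ∈ S_a`.  Each `T_w` is invertible. -/
structure HeckeAlg {Y X W0 Wt : Type}
    [AddCommGroup Y] [AddCommGroup X] [Group W0] [Group Wt]
    (S : AffineWeylSetup Y X W0 Wt) (H : Type) [Ring H] [Algebra HckA H] where
  /-- the Iwahori–Matsumoto basis `T_w` -/
  T : Module.Basis Wt HckA H
  T_one : T 1 = 1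
  T_mul : ∀ g g' : Wt, S.len (g * g') = S.len g + S.len g' → T g * T g' = T (g * g')
  T_quad : ∀ s ∈ S.Sa, (T s + 1) * (T s - algebraMap HckA H qA) = 0
  T_unit : ∀ g : Wt, IsUnit (T g)

namespace HeckeAlg

variable {Y X W0 Wt : Type} [AddCommGroup Y] [AddCommGroup X] [Group W0] [Group Wt]
variable {S : AffineWeylSetup Y X W0 Wt} {H : Type} [Ring H] [Algebra HckA H]

/-- The renormalized basis element `T̃_w = q^{-l(w)/2} T_w`. -/
def Tt (hk : HeckeAlg S H) (g : Wt) : H :=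
  (LaurentPolynomial.T (-(S.len g : ℤ)) : HckA) • hk.T g

/-- The coefficient of `T̃_x` in an element `h ∈ H`, i.e. `h = Σ_x (coeffTt h x) T̃_x`. -/
def coeffTt (hk : HeckeAlg S H) (h : H) (x : Wt) : HckA :=
  (LaurentPolynomial.T ((S.len x : ℤ)) : HckA) * hk.T.repr h x

/-- The support of an element of `H` with respect to the basis `(T̃_w)` (equivalently
`(T_w)`). -/
def supp (hk : HeckeAlg S H) (h : H) : Set Wt := {w | hk.T.repr h w ≠ 0}

/-- The `R`-polynomial `R̃_{x,y}`, defined by `T̃_{y⁻¹}⁻¹ = Σ_x R̃_{x,y} T̃_x`. -/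
def Rt (hk : HeckeAlg S H) (x y : Wt) : HckA :=
  hk.coeffTt (Ring.inverse (hk.Tt y⁻¹)) x

/-- `Θ⁻` attached to a decomposition `λ = λ'_1 - λ'_2` (`λ'_i` antidominant):
`Θ⁻_λ = T̃_{λ'_1} T̃_{λ'_2}⁻¹`. -/
def ThetaAnti (hk : HeckeAlg S H) (l1 l2 : X) : H :=
  hk.Tt (S.t l1) * Ring.inverse (hk.Tt (S.t l2))

/-- `Θ` attached to a decomposition `λ = λ_1 - λ_2` (`λ_i` dominant):
`Θ_λ = T̃_{λ_1} T̃_{λ_2}⁻¹`. -/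
def ThetaDom (hk : HeckeAlg S H) (l1 l2 : X) : H :=
  hk.Tt (S.t l1) * Ring.inverse (hk.Tt (S.t l2))

end HeckeAlg

end
section GLn

/-- The `i`-th standard basis vector `e_i ∈ ℤⁿ` (`i : Fin n`). -/
def stdE (n : ℕ) (i : Fin n) : Fin n → ℤ := fun j => if j = i then 1 else 0

/-- The standard basis vector `e_{i+1} ∈ ℤⁿ`, with a 0-based index `i : ℕ`. -/
def eN (n : ℕ) (i : ℕ) : Fin n → ℤ := fun j => if (j : ℕ) = i then 1 else 0

/-- `IsGLn n S` pins down an `AffineWeylSetup` as the root datum of `GL_n`: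
`X_* = X^* = ℤⁿ`, `W0 = S_n` acting by permuting coordinates, roots `e_i - e_j`
(`i ≠ j`), positive roots `e_i - e_j` (`i < j`), simple roots `α_i = e_i - e_{i+1}`,
with `coroot (e_i - e_j) = e_i - e_j` and `s_{e_i - e_j}` the transposition `(i j)`. -/
structure IsGLn (n : ℕ) {Wt : Type} [Group Wt]
    (S : AffineWeylSetup (Fin n → ℤ) (Fin n → ℤ) (Equiv.Perm (Fin n)) Wt) : Prop where
  pair_eq : ∀ a x, S.pair a x = ∑ i, a i * x i
  R_eq : S.R = Finset.univ.offDiag.image (fun p : Fin n × Fin n => stdE n p.1 - stdE n p.2)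
  Rpos_eq : S.Rpos = (Finset.univ.offDiag.filter (fun p : Fin n × Fin n => p.1 < p.2)).image
      (fun p => stdE n p.1 - stdE n p.2)
  Pi_eq : S.Pi = (Finset.range (n-1)).image (fun j => eN n j - eN n (j+1))
  coroot_eq : ∀ i j : Fin n, i ≠ j → S.coroot (stdE n i - stdE n j) = stdE n i - stdE n j
  act_eq : ∀ w x i, S.act w x i = x (w⁻¹ i)
  actY_eq : ∀ w a i, S.actY w a i = a (w⁻¹ i)
  sref_eq : ∀ i j : Fin n, i ≠ j → S.sref (stdE n i - stdE n j) = Equiv.swap i j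

variable {n : ℕ} {Wt : Type} [Group Wt]

/-- The simple reflection `s_{j+1} = s_{α_{j+1}}` of `GL_n` (0-based index `j`,
so `srefGL S j` is the paper's `s_{j+1}`). -/
def srefGL (S : AffineWeylSetup (Fin n → ℤ) (Fin n → ℤ) (Equiv.Perm (Fin n)) Wt)
    (j : ℕ) : Equiv.Perm (Fin n) :=
  S.sref (eN n j - eN n (j+1))

/-- The distinguished length-zero element `τ = t_{(1,0,…,0)} s_1 ⋯ s_{n-1} ∈ Ω` of `GL_n`. -/
def tauGL (S : AffineWeylSetup (Fin n → ℤ) (Fin n → ℤ) (Equiv.Perm (Fin n)) Wt) : Wt :=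
  S.t (eN n 0) * S.emb ((List.range (n-1)).map (srefGL S)).prod

/-- The word `s_{k-1} ⋯ s_1` (1-based indices), as a list in `W̃`. -/
def SkList (S : AffineWeylSetup (Fin n → ℤ) (Fin n → ℤ) (Equiv.Perm (Fin n)) Wt)
    (k : ℕ) : List Wt :=
  (List.range (k-1)).reverse.map (fun j => S.emb (srefGL S j))

/-- The word `s_{n-1} ⋯ s_k` (1-based indices), as a list in `W̃`. -/
def VkList (S : AffineWeylSetup (Fin n → ℤ) (Fin n → ℤ) (Equiv.Perm (Fin n)) Wt)
    (k : ℕ) : List Wt :=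
  (List.range' (k-1) (n-k)).reverse.map (fun j => S.emb (srefGL S j))

end GLn

section Lem45Aux

/-- Hypothesis that `σ j` is the adjacent transposition `(j, j+1)` whenever defined. -/
def swHyp (n : ℕ) (σ : ℕ → Equiv.Perm (Fin n)) : Prop :=
  ∀ (j : ℕ) (h : j + 1 < n), σ j = Equiv.swap ⟨j, Nat.lt_of_succ_lt h⟩ ⟨j + 1, h⟩

variable {n : ℕ} {σ : ℕ → Equiv.Perm (Fin n)}

lemma sval (hσ : swHyp n σ) (j : ℕ) (h : j + 1 < n) (q : Fin n) :
    ((σ j) q : ℕ) = if (q : ℕ) = j then j + 1 else if (q : ℕ) = j + 1 then j else (q : ℕ) := by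
  rw [hσ j h]
  rcases eq_or_ne q ⟨j, Nat.lt_of_succ_lt h⟩ with rfl | h1
  · simp [Equiv.swap_apply_left]
  · rcases eq_or_ne q ⟨j + 1, h⟩ with rfl | h2
    · simp [Equiv.swap_apply_right]
    · rw [Equiv.swap_apply_of_ne_of_ne h1 h2]
      have h1' : (q : ℕ) ≠ j := fun hh => h1 (Fin.ext hh)
      have h2' : (q : ℕ) ≠ j + 1 := fun hh => h2 (Fin.ext hh)
      simp [h1', h2']

lemma prod_fix_high (hσ : swHyp n σ) (r : ℕ) :
    ∀ (L : List ℕ), (∀ j ∈ L, j + 1 < n ∧ j < r) → ∀ (q : Fin n), r < (q : ℕ) →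
      ((L.map σ).prod) q = q := by
  intro L
  induction L with
  | nil => simp
  | cons j L ih =>
    intro hL q hq
    have hj := hL j (by simp)
    rw [List.map_cons, List.prod_cons, Equiv.Perm.mul_apply,
      ih (fun a ha => hL a (by simp [ha])) q hq]
    apply Fin.ext
    rw [sval hσ j hj.1 q]
    have := hj.2
    split_ifs <;> omega

lemma prod_fix_low (hσ : swHyp n σ) (r : ℕ) :
    ∀ (L : List ℕ), (∀ j ∈ L, j + 1 < n ∧ r ≤ j) → ∀ (q : Fin n), (q : ℕ) < r →
      ((L.map σ).prod) q = q := by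
  intro L
  induction L with
  | nil => simp
  | cons j L ih =>
    intro hL q hq
    have hj := hL j (by simp)
    rw [List.map_cons, List.prod_cons, Equiv.Perm.mul_apply,
      ih (fun a ha => hL a (by simp [ha])) q hq]
    apply Fin.ext
    rw [sval hσ j hj.1 q]
    have := hj.2
    split_ifs <;> omega

lemma prod_le_bound (hσ : swHyp n σ) (r : ℕ) :
    ∀ (L : List ℕ), (∀ j ∈ L, j + 1 < n ∧ j + 1 ≤ r) → ∀ (q : Fin n), (q : ℕ) ≤ r →
      (((L.map σ).prod) q : ℕ) ≤ r := by
  intro L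
  induction L with
  | nil => simpa using fun q h => h
  | cons j L ih =>
    intro hL q hq
    have hj := hL j (by simp)
    rw [List.map_cons, List.prod_cons, Equiv.Perm.mul_apply]
    have hih := ih (fun a ha => hL a (by simp [ha])) q hq
    rw [sval hσ j hj.1 _]
    have := hj.2
    split_ifs <;> omega

lemma cycle_apply (hσ : swHyp n σ) :
    ∀ (r : ℕ) (_ : r + 1 ≤ n) (q : Fin n) (_ : (q : ℕ) < r),
      (((List.range r).map σ).prod) q = ⟨(q : ℕ) + 1, by omega⟩ := by
  intro r
  induction r with
  | zero => intro _ q hq; exact absurd hq (Nat.not_lt_zero _)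
  | succ r ih =>
    intro hr q hq
    rw [List.range_succ, List.map_append, List.prod_append, List.map_singleton,
      List.prod_singleton, Equiv.Perm.mul_apply]
    rcases Nat.lt_or_ge (q : ℕ) r with h | h
    · have hfix : σ r q = q := by
        apply Fin.ext
        rw [sval hσ r (by omega) q]
        split_ifs <;> omega
      rw [hfix, ih (by omega) q h]
    · have hqr : (q : ℕ) = r := by omega
      have h1 : σ r q = ⟨r + 1, by omega⟩ := by
        apply Fin.ext
        rw [sval hσ r (by omega) q]
        simp only [Fin.val_mk]
        split_ifs <;> omega
      rw [h1, prod_fix_high hσ r (List.range r)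
        (fun j hjm => by rw [List.mem_range] at hjm; omega) _ (by simp)]
      apply Fin.ext
      simp [hqr]

lemma full_apply (hσ : swHyp n σ) :
    ∀ (r : ℕ), r < n → ∀ (q : Fin n), 1 ≤ (q : ℕ) → (q : ℕ) ≤ r →
      (((List.range r).reverse.map σ).prod) q = ⟨(q : ℕ) - 1, by omega⟩ := by
  intro r
  induction r with
  | zero => intro _ q h1 h2; exact absurd (h1.trans h2) (by omega)
  | succ r ih =>
    intro hr q h1 h2
    have hrev : (List.range (r + 1)).reverse = r :: (List.range r).reverse := by
      rw [List.range_succ, List.reverse_append]; simp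
    rw [hrev, List.map_cons, List.prod_cons, Equiv.Perm.mul_apply]
    rcases Nat.lt_or_ge r (q : ℕ) with h | h
    · have hq : (q : ℕ) = r + 1 := by omega
      rw [prod_fix_high hσ r ((List.range r).reverse)
        (fun j hjm => by rw [List.mem_reverse, List.mem_range] at hjm; omega) q (by omega)]
      apply Fin.ext
      rw [sval hσ r (by omega) q]
      simp only [Fin.val_mk]
      split_ifs <;> omega
    · rw [ih (by omega) q h1 h]
      apply Fin.ext
      rw [sval hσ r (by omega) _]
      simp only [Fin.val_mk]
      split_ifs <;> omega

lemma proper_apply (hσ : swHyp n σ) (hn : 0 < n) :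
    ∀ (r : ℕ), r < n → ∀ (L : List ℕ),
      L.Sublist (List.range r).reverse → L ≠ (List.range r).reverse →
      ((((L.map σ).prod) ⟨0, hn⟩ : Fin n) : ℕ) < r := by
  intro r
  induction r with
  | zero =>
    intro _ L hs hne
    rw [List.range_zero, List.reverse_nil] at hs hne
    exact absurd (List.sublist_nil.mp hs) hne
  | succ r ih =>
    intro hr L hs hne
    have hrev : (List.range (r + 1)).reverse = r :: (List.range r).reverse := by
      rw [List.range_succ, List.reverse_append]; simp
    rw [hrev] at hs hne
    rcases List.sublist_cons_iff.mp hs with h | ⟨L', rfl, hL'⟩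
    · have hb := prod_le_bound hσ r L
        (fun j hjm => by
          have := h.subset hjm
          rw [List.mem_reverse, List.mem_range] at this
          omega) ⟨0, hn⟩ (by simp)
      omega
    · have hne' : L' ≠ (List.range r).reverse := fun hh => hne (by rw [hh])
      rw [List.map_cons, List.prod_cons, Equiv.Perm.mul_apply]
      have hv := ih (by omega) L' hL' hne'
      rw [sval hσ r (by omega) _]
      split_ifs <;> omega

end Lem45Aux

section Lem45Prod

lemma prod_t_emb {Y X W0 Wt : Type} [AddCommGroup Y] [AddCommGroup X] [Group W0] [Group Wt]
    (S : AffineWeylSetup Y X W0 Wt) (f : ℕ → X) (w : ℕ → W0) :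
    ∀ M : ℕ, ((List.range M).map (fun i => S.t (f i) * S.emb (w i))).prod
      = S.t (∑ i ∈ Finset.range M, S.act (((List.range i).map w).prod) (f i))
        * S.emb (((List.range M).map w).prod) := by
  intro M
  induction M with
  | zero => simp [S.t_zero]
  | succ M ih =>
    simp only [List.range_succ, List.map_append, List.prod_append, List.map_singleton,
      List.prod_singleton, Finset.sum_range_succ, ih]
    calc (S.t (∑ i ∈ Finset.range M, S.act (((List.range i).map w).prod) (f i))
            * S.emb (((List.range M).map w).prod)) * (S.t (f M) * S.emb (w M))
        = S.t (∑ i ∈ Finset.range M, S.act (((List.range i).map w).prod) (f i))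
            * (S.emb (((List.range M).map w).prod) * S.t (f M)) * S.emb (w M) := by
          simp only [mul_assoc]
      _ = S.t (∑ i ∈ Finset.range M, S.act (((List.range i).map w).prod) (f i))
            * (S.t (S.act (((List.range M).map w).prod) (f M))
              * S.emb (((List.range M).map w).prod)) * S.emb (w M) := by
          rw [S.conj_t]
      _ = (S.t (∑ i ∈ Finset.range M, S.act (((List.range i).map w).prod) (f i))
            * S.t (S.act (((List.range M).map w).prod) (f M)))
            * (S.emb (((List.range M).map w).prod) * S.emb (w M)) := by
          simp only [mul_assoc]
      _ = S.t (∑ i ∈ Finset.range M, S.act (((List.range i).map w).prod) (f i)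
              + S.act (((List.range M).map w).prod) (f M))
            * S.emb (((List.range M).map w).prod * w M) := by
          rw [S.t_add, map_mul]

end Lem45Prod

set_option maxHeartbeats 1000000 in
open AffineWeylSetup in
/-- **Lemma 4.5.** Let `x = u_1 τ v_1 ⋯ u_m τ v_m` be a subexpression of
`t_{m e_k} = (s_{k-1} ⋯ s_1 τ s_{n-1} ⋯ s_k)^m`, where each `u_i` (resp. `v_i`) is a
subword of `s_{k-1} ⋯ s_1` (resp. `s_{n-1} ⋯ s_k`), and suppose some `u_p` is a
proper subword.  Then `λ(x) ⋠ m e_k`. -/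
theorem translation_part_not_preceq
    {Wt : Type} [Group Wt]
    (n m k : ℕ) (hk1 : 1 ≤ k) (hkn : k ≤ n) (hm : 1 ≤ m)
    (S : AffineWeylSetup (Fin n → ℤ) (Fin n → ℤ) (Equiv.Perm (Fin n)) Wt)
    (hgl : IsGLn n S)
    (U V : ℕ → List Wt)
    (hU : ∀ i < m, (U i).Sublist (SkList S k))
    (hV : ∀ i < m, (V i).Sublist (VkList S k))
    (p : ℕ) (hp : p < m) (hproper : U p ≠ SkList S k)
    (x : Wt)
    (hx : x = ((List.range m).map (fun i => (U i).prod * tauGL S * (V i).prod)).prod) :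
    ¬ S.preceq (S.lam x) ((m : ℤ) • eN n (k-1)) := by
  classical
  have hn : 0 < n := lt_of_lt_of_le hk1 hkn
  have hk2 : 2 ≤ k := by
    by_contra hcon
    have hk : k = 1 := by omega
    apply hproper
    have hsub := hU p hp
    rw [hk] at hsub ⊢
    simp only [SkList, show (1:ℕ) - 1 = 0 from rfl, List.range_zero, List.reverse_nil,
      List.map_nil] at hsub ⊢
    exact List.sublist_nil.mp hsub
  set fW : ℕ → Wt := fun j => S.emb (srefGL S j) with hfW
  have hSkdef : SkList S k = ((List.range (k-1)).reverse).map fW := rfl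
  have hVkdef : VkList S k = ((List.range' (k-1) (n-k)).reverse).map fW := rfl
  have hJex : ∀ i : ℕ, ∃ L : List ℕ, i < m →
      L.Sublist (List.range (k-1)).reverse ∧ U i = L.map fW ∧
      (U i = SkList S k → L = (List.range (k-1)).reverse) := by
    intro i
    by_cases him : i < m
    · by_cases hful : U i = SkList S k
      · exact ⟨(List.range (k-1)).reverse,
          fun _ => ⟨List.Sublist.refl _, by rw [hful, hSkdef], fun _ => rfl⟩⟩
      · have hs := hU i him
        rw [hSkdef] at hs
        obtain ⟨L, hL1, hL2⟩ := List.sublist_map_iff.mp hs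
        exact ⟨L, fun _ => ⟨hL1, hL2, fun h => absurd h hful⟩⟩
    · exact ⟨[], fun h => absurd h him⟩
  choose J hJ using hJex
  have hKex : ∀ i : ℕ, ∃ L : List ℕ, i < m →
      L.Sublist (List.range' (k-1) (n-k)).reverse ∧ V i = L.map fW := by
    intro i
    by_cases him : i < m
    · have hs := hV i him
      rw [hVkdef] at hs
      obtain ⟨L, hL1, hL2⟩ := List.sublist_map_iff.mp hs
      exact ⟨L, fun _ => ⟨hL1, hL2⟩⟩
    · exact ⟨[], fun h => absurd h him⟩
  choose K hK using hKex
  set σ : ℕ → Equiv.Perm (Fin n) := srefGL S with hσdef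
  have hσ : swHyp n σ := by
    intro j hj
    have hroot : eN n j - eN n (j+1) = stdE n ⟨j, Nat.lt_of_succ_lt hj⟩ - stdE n ⟨j+1, hj⟩ := by
      funext i
      simp only [Pi.sub_apply, eN, stdE, Fin.ext_iff]
    show S.sref (eN n j - eN n (j+1)) = _
    rw [hroot]
    exact hgl.sref_eq _ _ (by simp [Fin.ext_iff])
  set cp : Equiv.Perm (Fin n) := ((List.range (n-1)).map σ).prod with hcp
  set A : ℕ → Equiv.Perm (Fin n) := fun i => ((J i).map σ).prod with hA
  set B : ℕ → Equiv.Perm (Fin n) := fun i => ((K i).map σ).prod with hB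
  set wp : ℕ → Equiv.Perm (Fin n) := fun i => A i * cp * B i with hwp
  set e0 : Fin n → ℤ := eN n 0 with he0
  have htau : tauGL S = S.t e0 * S.emb cp := rfl
  have hfac : ∀ i ∈ List.range m, (U i).prod * tauGL S * (V i).prod
      = (fun i => S.t (S.act (A i) e0) * S.emb (wp i)) i := by
    intro i hi
    have him : i < m := List.mem_range.mp hi
    obtain ⟨hJ1, hJ2, _⟩ := hJ i him
    obtain ⟨hK1, hK2⟩ := hK i him
    have hUp : (U i).prod = S.emb (A i) := by
      rw [hJ2]
      calc ((J i).map fW).prod = (((J i).map σ).map (⇑S.emb)).prod := by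
            rw [List.map_map]; rfl
        _ = S.emb (((J i).map σ).prod) := List.prod_hom _ S.emb
    have hVp : (V i).prod = S.emb (B i) := by
      rw [hK2]
      calc ((K i).map fW).prod = (((K i).map σ).map (⇑S.emb)).prod := by
            rw [List.map_map]; rfl
        _ = S.emb (((K i).map σ).prod) := List.prod_hom _ S.emb
    simp only
    rw [hUp, hVp, htau]
    calc S.emb (A i) * (S.t e0 * S.emb cp) * S.emb (B i)
        = (S.emb (A i) * S.t e0) * (S.emb cp * S.emb (B i)) := by simp only [mul_assoc]
      _ = (S.t (S.act (A i) e0) * S.emb (A i)) * (S.emb cp * S.emb (B i)) := by rw [S.conj_t]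
      _ = S.t (S.act (A i) e0) * S.emb (A i * cp * B i) := by
          rw [map_mul, map_mul]; simp only [mul_assoc]
  have hxval : x = S.t (∑ i ∈ Finset.range m,
        S.act (((List.range i).map wp).prod) (S.act (A i) e0))
      * S.emb (((List.range m).map wp).prod) := by
    rw [hx, List.map_congr_left hfac]
    exact prod_t_emb S _ wp m
  have hlam : S.lam x = ∑ i ∈ Finset.range m,
      S.act (((List.range i).map wp).prod) (S.act (A i) e0) := by
    rw [hxval]; exact S.lam_spec _ _
  -- minimal bad index
  have hex : ∃ i, i < m ∧ U i ≠ SkList S k := ⟨p, hp, hproper⟩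
  set p0 := Nat.find hex with hp0def
  have hp0m : p0 < m := (Nat.find_spec hex).1
  have hp0ne : U p0 ≠ SkList S k := (Nat.find_spec hex).2
  have hmin : ∀ i < p0, U i = SkList S k := by
    intro i hi
    by_contra hne
    exact Nat.find_min hex hi ⟨lt_trans hi hp0m, hne⟩
  -- invariant: pi M fixes low coordinates
  have hinv : ∀ M, M ≤ p0 → ∀ q : Fin n, (q : ℕ) < k - 1 →
      ((List.range M).map wp).prod q = q := by
    intro M
    induction M with
    | zero => intro _ q _; simp
    | succ M ih =>
      intro hM q hq
      have hMp : M < p0 := by omega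
      have hMm : M < m := by omega
      have hq1 : (q : ℕ) + 1 < n := by omega
      rw [List.range_succ, List.map_append, List.prod_append, List.map_singleton,
        List.prod_singleton, Equiv.Perm.mul_apply]
      have h1 : B M q = q := by
        apply prod_fix_low hσ (k-1) (K M) ?_ q hq
        intro j hjK
        have hmem := (hK M hMm).1.subset hjK
        rw [List.mem_reverse, List.mem_range'_1] at hmem
        constructor <;> omega
      have h2 : cp q = ⟨(q : ℕ) + 1, hq1⟩ := by
        have := cycle_apply hσ (n-1) (by omega) q (by omega)
        rw [hcp, this]
      have hJM : J M = (List.range (k-1)).reverse := (hJ M hMm).2.2 (hmin M hMp)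
      have h3 : A M ⟨(q : ℕ) + 1, hq1⟩ = q := by
        have hfull := full_apply hσ (k-1) (by omega) (⟨(q : ℕ) + 1, hq1⟩ : Fin n)
          (by simp) (by simp; omega)
        rw [hA]
        simp only
        rw [hJM, hfull]
        apply Fin.ext
        simp
      have hwq : wp M q = q := by
        show (A M * cp * B M) q = q
        rw [Equiv.Perm.mul_apply, Equiv.Perm.mul_apply, h1, h2, h3]
      rw [hwq]
      exact ih (by omega) q hq
  -- the key index has small value
  have hJp : J p0 ≠ (List.range (k-1)).reverse := by
    intro h
    apply hp0ne
    rw [(hJ p0 hp0m).2.1, h, hSkdef]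
  have h5 : (((A p0) ⟨0, hn⟩ : Fin n) : ℕ) < k - 1 :=
    proper_apply hσ hn (k-1) (by omega) (J p0) (hJ p0 hp0m).1 hJp
  have hkey : ((((List.range p0).map wp).prod ((A p0) ⟨0, hn⟩) : Fin n) : ℕ) < k - 1 := by
    rw [hinv p0 le_rfl _ h5]
    exact h5
  -- now the contradiction with preceq
  intro hpre
  obtain ⟨cf, hc⟩ := hpre
  rw [hlam] at hc
  set Fs : Finset (Fin n) := Finset.univ.filter (fun j => (j : ℕ) < k - 1) with hFs
  have hvec : ∀ (u : Equiv.Perm (Fin n)) (jj : Fin n),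
      S.act u e0 jj = if jj = u ⟨0, hn⟩ then 1 else 0 := by
    intro u jj
    rw [hgl.act_eq, he0]
    have hiff : ((u⁻¹ jj : Fin n) : ℕ) = 0 ↔ jj = u ⟨0, hn⟩ := by
      constructor
      · intro h
        have h2 : u⁻¹ jj = ⟨0, hn⟩ := Fin.ext h
        rw [← h2, ← Equiv.Perm.mul_apply, mul_inv_cancel, Equiv.Perm.one_apply]
      · intro h
        rw [h]
        show ((u⁻¹ (u ⟨0, hn⟩) : Fin n) : ℕ) = 0
        rw [← Equiv.Perm.mul_apply, inv_mul_cancel, Equiv.Perm.one_apply]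
    simp only [eN]
    exact if_congr hiff rfl rfl
  have hsum := congrArg (fun v : Fin n → ℤ => ∑ j ∈ Fs, v j) hc
  simp only [Pi.sub_apply, Finset.sum_sub_distrib] at hsum
  -- left piece 1 : m • e_{k-1} sums to 0 over Fs
  have hzero : ∑ j ∈ Fs, ((m : ℤ) • eN n (k-1)) j = 0 := by
    apply Finset.sum_eq_zero
    intro j hj
    have hjlt : (j : ℕ) < k - 1 := (Finset.mem_filter.mp hj).2
    have : (j : ℕ) ≠ k - 1 := by omega
    simp [eN, this]
  -- left piece 2 : the lambda sum is at least 1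
  have hLam : ∑ j ∈ Fs, (∑ i ∈ Finset.range m,
        S.act (((List.range i).map wp).prod) (S.act (A i) e0)) j
      = ∑ i ∈ Finset.range m,
          (if (((((List.range i).map wp).prod * A i) ⟨0, hn⟩ : Fin n) : ℕ) < k - 1
            then (1:ℤ) else 0) := by
    have e1 : ∀ i, S.act (((List.range i).map wp).prod) (S.act (A i) e0)
        = S.act (((List.range i).map wp).prod * A i) e0 := fun i => (S.act_mul _ _ _).symm
    calc ∑ j ∈ Fs, (∑ i ∈ Finset.range m,
            S.act (((List.range i).map wp).prod) (S.act (A i) e0)) j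
        = ∑ j ∈ Fs, ∑ i ∈ Finset.range m,
            (if j = (((List.range i).map wp).prod * A i) ⟨0, hn⟩ then (1:ℤ) else 0) := by
          apply Finset.sum_congr rfl
          intro j _
          rw [Finset.sum_apply]
          apply Finset.sum_congr rfl
          intro i _
          rw [e1, hvec]
      _ = ∑ i ∈ Finset.range m, ∑ j ∈ Fs,
            (if j = (((List.range i).map wp).prod * A i) ⟨0, hn⟩ then (1:ℤ) else 0) :=
          Finset.sum_comm
      _ = _ := by
          apply Finset.sum_congr rfl
          intro i _
          rw [Finset.sum_ite_eq' Fs _ (fun _ => (1:ℤ))]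
          congr 1
          simp [hFs]
  have hge : (1:ℤ) ≤ ∑ i ∈ Finset.range m,
      (if (((((List.range i).map wp).prod * A i) ⟨0, hn⟩ : Fin n) : ℕ) < k - 1
        then (1:ℤ) else 0) := by
    have hmem : p0 ∈ Finset.range m := Finset.mem_range.mpr hp0m
    have hsingle := Finset.single_le_sum
      (f := fun i => if (((((List.range i).map wp).prod * A i) ⟨0, hn⟩ : Fin n) : ℕ) < k - 1
        then (1:ℤ) else 0)
      (fun i _ => by split_ifs <;> norm_num) hmem
    have hcond : ((((List.range p0).map wp).prod * A p0) (⟨0, hn⟩ : Fin n) : ℕ) < k - 1 := by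
      rw [Equiv.Perm.mul_apply]; exact hkey
    rw [if_pos hcond] at hsingle
    exact hsingle
  -- right piece : nonnegative
  have hmono : ∀ t : ℕ, ∑ j ∈ Fs, eN n t j = if t < k - 1 then (1:ℤ) else 0 := by
    intro t
    by_cases ht : t < k - 1
    · have htn : t < n := by omega
      rw [if_pos ht]
      rw [Finset.sum_eq_single_of_mem (⟨t, htn⟩ : Fin n)
        (by simp [hFs, ht]) ?_]
      · simp [eN]
      · intro b _ hbne
        have : (b : ℕ) ≠ t := fun hh => hbne (Fin.ext hh)
        simp [eN, this]
    · rw [if_neg ht]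
      apply Finset.sum_eq_zero
      intro j hj
      have hjlt : (j : ℕ) < k - 1 := (Finset.mem_filter.mp hj).2
      have : (j : ℕ) ≠ t := by omega
      simp [eN, this]
  have hrhs : 0 ≤ ∑ j ∈ Fs, (∑ α ∈ S.Pi, (cf α : ℤ) • S.coroot α) j := by
    have hswap : ∑ j ∈ Fs, (∑ α ∈ S.Pi, (cf α : ℤ) • S.coroot α) j
        = ∑ α ∈ S.Pi, (cf α : ℤ) * (∑ j ∈ Fs, S.coroot α j) := by
      calc ∑ j ∈ Fs, (∑ α ∈ S.Pi, (cf α : ℤ) • S.coroot α) j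
          = ∑ j ∈ Fs, ∑ α ∈ S.Pi, (cf α : ℤ) * S.coroot α j := by
            apply Finset.sum_congr rfl
            intro j _
            rw [Finset.sum_apply]
            apply Finset.sum_congr rfl
            intro α _
            rw [Pi.smul_apply, smul_eq_mul]
        _ = ∑ α ∈ S.Pi, ∑ j ∈ Fs, (cf α : ℤ) * S.coroot α j := Finset.sum_comm
        _ = _ := by
            apply Finset.sum_congr rfl
            intro α _
            rw [Finset.mul_sum]
    rw [hswap]
    apply Finset.sum_nonneg
    intro α hα
    rw [hgl.Pi_eq] at hα
    obtain ⟨jj, hjjm, rfl⟩ := Finset.mem_image.mp hα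
    have hjj : jj < n - 1 := Finset.mem_range.mp hjjm
    have hne : (⟨jj, by omega⟩ : Fin n) ≠ ⟨jj+1, by omega⟩ := by simp [Fin.ext_iff]
    have hst : eN n jj - eN n (jj+1)
        = stdE n ⟨jj, by omega⟩ - stdE n ⟨jj+1, by omega⟩ := by
      funext i
      simp only [Pi.sub_apply, eN, stdE, Fin.ext_iff]
    have hco : S.coroot (eN n jj - eN n (jj+1)) = eN n jj - eN n (jj+1) := by
      have h9 := hgl.coroot_eq ⟨jj, by omega⟩ ⟨jj+1, by omega⟩ hne
      rw [← hst] at h9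
      exact h9
    rw [hco]
    apply mul_nonneg (Int.natCast_nonneg _)
    simp only [Pi.sub_apply, Finset.sum_sub_distrib]
    rw [hmono, hmono]
    split_ifs <;> omega
  linarith [hsum, hzero, hLam, hge, hrhs]
end

section
/- Every coweight λ ∈ Z^n of GL_n can be written as λ = λ_1 + λ_2 + ⋯ + λ_k, where each λ_j is a minuscule coweight and the lengths add: l(t_λ) = l(t_{λ_1}) + l(t_{λ_2}) + ⋯ + l(t_{λ_k}). -/
open scoped Classical

section Aux

variable {n : ℕ} {Wt : Type} [Group Wt]

lemma aux_list_sum_apply (l : List (Fin n → ℤ)) (i : Fin n) :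
    l.sum i = (l.map (fun f => f i)).sum := by
  induction l with
  | nil => rfl
  | cons f l ih => simp [List.sum_cons, Pi.add_apply, ih]

lemma aux_list_sum_sub (l : List (Fin n → ℤ)) (i j : Fin n) :
    (l.map (fun f => f i - f j)).sum = l.sum i - l.sum j := by
  induction l with
  | nil => simp
  | cons f l ih =>
    simp only [List.map_cons, List.sum_cons, ih, Pi.add_apply]
    ring

lemma aux_natAbs_sum_nonneg (l : List ℤ) (h : ∀ x ∈ l, 0 ≤ x) :
    l.sum.natAbs = (l.map Int.natAbs).sum := by
  induction l with
  | nil => rfl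
  | cons a l ih =>
    have ha := h a (by simp)
    have hl : 0 ≤ l.sum := List.sum_nonneg (fun x hx => h x (by simp [hx]))
    have := ih (fun x hx => h x (by simp [hx]))
    simp only [List.sum_cons, List.map_cons]
    omega

lemma aux_sum_nonpos (l : List ℤ) (h : ∀ x ∈ l, x ≤ 0) : l.sum ≤ 0 := by
  induction l with
  | nil => simp
  | cons a l ih =>
    have ha := h a (by simp)
    have := ih (fun x hx => h x (by simp [hx]))
    simp only [List.sum_cons]
    omega

lemma aux_natAbs_sum_nonpos (l : List ℤ) (h : ∀ x ∈ l, x ≤ 0) :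
    l.sum.natAbs = (l.map Int.natAbs).sum := by
  induction l with
  | nil => rfl
  | cons a l ih =>
    have ha := h a (by simp)
    have hl : l.sum ≤ 0 := aux_sum_nonpos l (fun x hx => h x (by simp [hx]))
    have := ih (fun x hx => h x (by simp [hx]))
    simp only [List.sum_cons, List.map_cons]
    omega

lemma aux_sum_list_comm {A : Type*} (s : Finset A) (L : List (Fin n → ℤ))
    (f : A → (Fin n → ℤ) → ℕ) :
    ∑ a ∈ s, (L.map (f a)).sum = (L.map (fun b => ∑ a ∈ s, f a b)).sum := by
  induction L with
  | nil => simp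
  | cons b L ih => simp [Finset.sum_add_distrib, ih]

lemma aux_list_range_sum (K : ℕ) (g : ℕ → ℤ) :
    ((List.range K).map g).sum = ∑ t ∈ Finset.range K, g t := by
  induction K with
  | zero => simp
  | succ k ih => rw [List.range_succ, Finset.sum_range_succ]; simp [ih]

lemma aux_count_layers (m v : ℤ) (K : ℕ) (h1 : m ≤ v) (h2 : v - m ≤ (K : ℤ)) :
    ∑ t ∈ Finset.range K, (if m + 1 + (t : ℤ) ≤ v then (1 : ℤ) else 0) = v - m := by
  classical
  have hfil : (Finset.range K).filter (fun t : ℕ => m + 1 + (t : ℤ) ≤ v)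
      = Finset.range (v - m).toNat := by
    ext t
    simp only [Finset.mem_filter, Finset.mem_range]
    omega
  rw [← Finset.sum_filter, hfil]
  simp only [Finset.sum_const, Finset.card_range, nsmul_eq_mul, mul_one]
  omega

lemma aux_pair_stdE (S : AffineWeylSetup (Fin n → ℤ) (Fin n → ℤ) (Equiv.Perm (Fin n)) Wt)
    (hgl : IsGLn n S) (i j : Fin n) (x : Fin n → ℤ) :
    S.pair (stdE n i - stdE n j) x = x i - x j := by
  rw [hgl.pair_eq]
  simp only [Pi.sub_apply, stdE, sub_mul, ite_mul, one_mul, zero_mul]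
  rw [Finset.sum_sub_distrib]
  simp [Finset.sum_ite_eq']

lemma aux_len_t (S : AffineWeylSetup (Fin n → ℤ) (Fin n → ℤ) (Equiv.Perm (Fin n)) Wt)
    (x : Fin n → ℤ) :
    S.len (S.t x) = ∑ α ∈ S.Rpos, (S.pair α x).natAbs := by
  classical
  have h1 : S.t x = S.t x * S.emb 1 := by rw [map_one, mul_one]
  have hl : S.lam (S.t x) = x := by rw [h1, S.lam_spec]
  have hf : S.fpart (S.t x) = 1 := by rw [h1, S.fpart_spec]
  simp only [AffineWeylSetup.len, hl, Finset.sum_filter, ← Finset.sum_add_distrib]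
  refine Finset.sum_congr rfl (fun α hα => ?_)
  have hP : S.actY (S.fpart (S.t x))⁻¹ α ∈ S.Rpos := by
    rw [hf, inv_one, S.actY_one]; exact hα
  simp [hP]

lemma aux_mem_R (S : AffineWeylSetup (Fin n → ℤ) (Fin n → ℤ) (Equiv.Perm (Fin n)) Wt)
    (hgl : IsGLn n S) {α : Fin n → ℤ} (hα : α ∈ S.R) :
    ∃ i j : Fin n, i ≠ j ∧ α = stdE n i - stdE n j := by
  rw [hgl.R_eq] at hα
  obtain ⟨⟨i, j⟩, hmem, heq⟩ := Finset.mem_image.mp hα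
  exact ⟨i, j, (Finset.mem_offDiag.mp hmem).2.2, heq.symm⟩

lemma aux_mem_Rpos (S : AffineWeylSetup (Fin n → ℤ) (Fin n → ℤ) (Equiv.Perm (Fin n)) Wt)
    (hgl : IsGLn n S) {α : Fin n → ℤ} (hα : α ∈ S.Rpos) :
    ∃ i j : Fin n, i ≠ j ∧ α = stdE n i - stdE n j :=
  aux_mem_R S hgl (S.Rpos_subset hα)

end Aux
open AffineWeylSetup in
/-- **Section 5.** Every coweight `λ ∈ ℤⁿ` of `GL_n` can be written as a sum of
minuscule coweights `λ = λ_1 + ⋯ + λ_k` with `l(t_λ) = l(t_{λ_1}) + ⋯ + l(t_{λ_k})`. -/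
theorem gln_minuscule_decomposition
    {Wt : Type} [Group Wt] (n : ℕ)
    (S : AffineWeylSetup (Fin n → ℤ) (Fin n → ℤ) (Equiv.Perm (Fin n)) Wt)
    (hgl : IsGLn n S) (lam : Fin n → ℤ) :
    ∃ L : List (Fin n → ℤ), (∀ μ ∈ L, S.Minuscule μ) ∧ lam = L.sum ∧
      S.len (S.t lam) = (L.map (fun μ => S.len (S.t μ))).sum := by
  classical
  rcases Nat.eq_zero_or_pos n with hn | hn
  · subst hn
    refine ⟨[], by simp, funext fun i => i.elim0, ?_⟩
    have hR : S.Rpos = ∅ := by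
      refine Finset.eq_empty_of_forall_notMem (fun α hα => ?_)
      have h := S.Rpos_subset hα
      rw [hgl.R_eq] at h
      obtain ⟨p, hp, _⟩ := Finset.mem_image.mp h
      exact p.1.elim0
    rw [aux_len_t S, hR]
    simp
  · set i0 : Fin n := ⟨0, hn⟩ with hi0
    have huniv : (Finset.univ : Finset (Fin n)).Nonempty := ⟨i0, Finset.mem_univ _⟩
    set m : ℤ := Finset.inf' Finset.univ huniv lam with hmdef
    set M : ℤ := Finset.sup' Finset.univ huniv lam with hMdef
    have hm : ∀ i, m ≤ lam i := fun i => Finset.inf'_le lam (Finset.mem_univ i)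
    have hM : ∀ i, lam i ≤ M := fun i => Finset.le_sup' lam (Finset.mem_univ i)
    set K : ℕ := (M - m).toNat with hKdef
    have hK : ∀ i, lam i - m ≤ (K : ℤ) := fun i => by have := hM i; have := hm i0; omega
    set c : ℤ := if 0 ≤ m then 1 else -1 with hcdef
    set μf : ℕ → Fin n → ℤ :=
      fun t i => if m + 1 + (t : ℤ) ≤ lam i then 1 else 0 with hμdef
    set L : List (Fin n → ℤ) :=
      List.replicate m.natAbs (fun _ : Fin n => c) ++ (List.range K).map μf with hLdef
    have hmem : ∀ f ∈ L, (∃ d : ℤ, f = fun _ => d) ∨ ∃ t : ℕ, f = μf t := by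
      intro f hf
      rcases List.mem_append.mp hf with h | h
      · exact Or.inl ⟨c, List.eq_of_mem_replicate h⟩
      · obtain ⟨t, _, rfl⟩ := List.mem_map.mp h
        exact Or.inr ⟨t, rfl⟩
    have hmono : ∀ f ∈ L, ∀ i j : Fin n, lam j ≤ lam i → f j ≤ f i := by
      intro f hf i j hij
      rcases hmem f hf with ⟨d, rfl⟩ | ⟨t, rfl⟩
      · exact le_refl d
      · simp only [hμdef]
        split_ifs <;> omega
    have hsmall : ∀ f ∈ L, ∀ i j : Fin n,
        f i - f j = 0 ∨ f i - f j = 1 ∨ f i - f j = -1 := by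
      intro f hf i j
      rcases hmem f hf with ⟨d, rfl⟩ | ⟨t, rfl⟩
      · left; ring
      · simp only [hμdef]
        split_ifs <;> omega
    have hsum : lam = L.sum := by
      funext i
      rw [aux_list_sum_apply, hLdef, List.map_append, List.sum_append,
        List.map_replicate, List.sum_replicate, List.map_map]
      have h2 : ((List.range K).map ((fun f : Fin n → ℤ => f i) ∘ μf)).sum = lam i - m := by
        rw [aux_list_range_sum]
        exact aux_count_layers m (lam i) K (hm i) (hK i)
      rw [h2, nsmul_eq_mul]
      clear h2
      by_cases h0 : 0 ≤ m <;> simp only [hcdef, h0, if_true, if_false] <;> omega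
    refine ⟨L, ?_, hsum, ?_⟩
    · intro f hf
      intro α hα
      obtain ⟨i, j, hij, rfl⟩ := aux_mem_R S hgl hα
      rw [aux_pair_stdE S hgl]
      exact hsmall f hf i j
    · rw [aux_len_t S]
      have hmap : L.map (fun f => S.len (S.t f))
          = L.map (fun f => ∑ α ∈ S.Rpos, (S.pair α f).natAbs) := by
        refine List.map_congr_left (fun f _ => aux_len_t S f)
      rw [hmap, ← aux_sum_list_comm]
      refine Finset.sum_congr rfl ?_
      intro α hα
      obtain ⟨i, j, hij, rfl⟩ := aux_mem_Rpos S hgl hα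
      have hmapeq : L.map (fun f => (S.pair (stdE n i - stdE n j) f).natAbs)
          = (L.map (fun f => f i - f j)).map Int.natAbs := by
        rw [List.map_map]
        exact List.map_congr_left (fun f _ => by
          simp [Function.comp, aux_pair_stdE S hgl])
      rw [aux_pair_stdE S hgl, hmapeq]
      have hsub : (L.map (fun f => f i - f j)).sum = lam i - lam j := by
        rw [aux_list_sum_sub, ← hsum]
      rcases le_total (lam j) (lam i) with h | h
      · rw [← hsub]
        refine aux_natAbs_sum_nonneg _ ?_
        intro x hx
        obtain ⟨f, hf, rfl⟩ := List.mem_map.mp hx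
        exact sub_nonneg.mpr (hmono f hf i j h)
      · rw [← hsub]
        refine aux_natAbs_sum_nonpos _ ?_
        intro x hx
        obtain ⟨f, hf, rfl⟩ := List.mem_map.mp hx
        exact sub_nonpos.mpr (hmono f hf j i h)
end

section
/- For every coweight λ ∈ Z^n of GL_n, the element Θ^-_λ has a minimal expression: there exist a reduced expression t_λ = t_1 ⋯ t_r τ (t_i ∈ S_a, τ ∈ Ω) and signs ε_i ∈ {1, -1} such that Θ^-_λ = T̃_{t_1}^{ε_1} ⋯ T̃_{t_r}^{ε_r} T̃_τ. -/
open scoped Classical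

/-! ### Auxiliary development for the proof -/

section GlnAux
open AffineWeylSetup HeckeAlg

variable {n : ℕ} {Wt : Type} [Group Wt]

/-- index set of pairs `i < j`. -/
def glnPS (n : ℕ) : Finset (Fin n × Fin n) :=
  Finset.univ.offDiag.filter (fun p => p.1 < p.2)

lemma mem_glnPS {n : ℕ} {p : Fin n × Fin n} : p ∈ glnPS n ↔ p.1 < p.2 := by
  constructor
  · intro h; exact (Finset.mem_filter.mp h).2
  · intro h
    exact Finset.mem_filter.mpr
      ⟨Finset.mem_offDiag.mpr ⟨Finset.mem_univ _, Finset.mem_univ _, ne_of_lt h⟩, h⟩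

/-- The contribution of a pair to the length. -/
def glnTrm (y : Fin n → ℤ) (u : Equiv.Perm (Fin n)) (p : Fin n × Fin n) : ℕ :=
  if u⁻¹ p.2 < u⁻¹ p.1 then (y p.1 - y p.2 - 1).natAbs else (y p.1 - y p.2).natAbs

/-- The concrete length function. -/
def glnLen (y : Fin n → ℤ) (u : Equiv.Perm (Fin n)) : ℕ := ∑ p ∈ glnPS n, glnTrm y u p

/-- Sort the image of a pair under a permutation. -/
def glnSrt (v : Equiv.Perm (Fin n)) (p : Fin n × Fin n) : Fin n × Fin n :=
  if v p.1 < v p.2 then (v p.1, v p.2) else (v p.2, v p.1)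

variable (S : AffineWeylSetup (Fin n → ℤ) (Fin n → ℤ) (Equiv.Perm (Fin n)) Wt)

lemma gln_te_mul (x y : Fin n → ℤ) (u v : Equiv.Perm (Fin n)) :
    (S.t x * S.emb u) * (S.t y * S.emb v) = S.t (x + S.act u y) * S.emb (u * v) := by
  have h : S.emb u * S.t y = S.t (S.act u y) * S.emb u := S.conj_t u y
  calc (S.t x * S.emb u) * (S.t y * S.emb v)
      = S.t x * (S.emb u * S.t y) * S.emb v := by
        rw [mul_assoc, mul_assoc, mul_assoc]
    _ = S.t x * (S.t (S.act u y) * S.emb u) * S.emb v := by rw [h]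
    _ = (S.t x * S.t (S.act u y)) * (S.emb u * S.emb v) := by
        rw [mul_assoc, mul_assoc, mul_assoc]
    _ = S.t (x + S.act u y) * S.emb (u * v) := by rw [← S.t_add, ← map_mul]

lemma gln_one_eq : (1 : Wt) = S.t 0 * S.emb 1 := by
  rw [S.t_zero, map_one, one_mul]

lemma gln_act_fun (hgl : IsGLn n S) (v : Equiv.Perm (Fin n)) (y : Fin n → ℤ) :
    S.act v y = fun i => y (v⁻¹ i) := funext fun i => hgl.act_eq v y i

lemma gln_stdE_sub_apply (i j a : Fin n) :
    (stdE n i - stdE n j) a = (if a = i then 1 else 0) - (if a = j then 1 else 0) := by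
  simp [stdE]

lemma gln_stdE_sub_self {i j : Fin n} (hij : i ≠ j) : (stdE n i - stdE n j) i = 1 := by
  rw [gln_stdE_sub_apply, if_pos rfl, if_neg hij]; ring

lemma gln_stdE_sub_self' {i j : Fin n} (hij : i ≠ j) : (stdE n i - stdE n j) j = -1 := by
  rw [gln_stdE_sub_apply, if_pos rfl, if_neg (Ne.symm hij)]; ring

lemma gln_pair_stdE (hgl : IsGLn n S) (i j : Fin n) (x : Fin n → ℤ) :
    S.pair (stdE n i - stdE n j) x = x i - x j := by
  rw [hgl.pair_eq]
  have : ∀ k : Fin n, (stdE n i - stdE n j) k * x k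
      = (if k = i then x k else 0) - (if k = j then x k else 0) := by
    intro k; rw [gln_stdE_sub_apply]; split_ifs <;> ring
  rw [Finset.sum_congr rfl fun k _ => this k, Finset.sum_sub_distrib,
    Finset.sum_ite_eq' Finset.univ i (fun k => x k),
    Finset.sum_ite_eq' Finset.univ j (fun k => x k)]
  simp

lemma gln_stdE_sub_inj {i j i' j' : Fin n} (hij : i ≠ j) (hij' : i' ≠ j')
    (h : stdE n i - stdE n j = stdE n i' - stdE n j') : i = i' ∧ j = j' := by
  have hi := congrFun h i
  have hj := congrFun h j
  rw [gln_stdE_sub_self hij, gln_stdE_sub_apply] at hi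
  rw [gln_stdE_sub_self' hij, gln_stdE_sub_apply] at hj
  constructor
  · split_ifs at hi <;> first | assumption | omega
  · split_ifs at hj <;> first | assumption | omega

lemma gln_mem_Rpos (hgl : IsGLn n S) {i j : Fin n} :
    stdE n i - stdE n j ∈ S.Rpos ↔ i < j := by
  rw [hgl.Rpos_eq]
  constructor
  · intro h
    obtain ⟨p, hp, heq⟩ := Finset.mem_image.mp h
    obtain ⟨hpd, hplt⟩ := Finset.mem_filter.mp hp
    have hpne : p.1 ≠ p.2 := ne_of_lt hplt
    by_cases hij : i = j
    · exfalso
      have h1 := gln_stdE_sub_self hpne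
      rw [heq] at h1
      subst hij
      simp at h1
    · obtain ⟨h1, h2⟩ := gln_stdE_sub_inj hpne hij heq
      rw [← h1, ← h2]; exact hplt
  · intro h
    exact Finset.mem_image.mpr ⟨(i, j),
      Finset.mem_filter.mpr ⟨Finset.mem_offDiag.mpr
        ⟨Finset.mem_univ _, Finset.mem_univ _, ne_of_lt h⟩, h⟩, rfl⟩

lemma gln_actY_stdE (hgl : IsGLn n S) (v : Equiv.Perm (Fin n)) (i j : Fin n) :
    S.actY v (stdE n i - stdE n j) = stdE n (v i) - stdE n (v j) := by
  funext a
  rw [hgl.actY_eq, gln_stdE_sub_apply, gln_stdE_sub_apply]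
  have e1 : (v⁻¹ a = i) = (a = v i) := by
    apply propext; constructor
    · intro h; rw [← h]; simp
    · intro h; rw [h]; simp
  have e2 : (v⁻¹ a = j) = (a = v j) := by
    apply propext; constructor
    · intro h; rw [← h]; simp
    · intro h; rw [h]; simp
  simp only [e1, e2]

/-- The length of `t_x w` in concrete terms. -/
lemma gln_len_te (hgl : IsGLn n S) (x : Fin n → ℤ) (w : Equiv.Perm (Fin n)) :
    S.len (S.t x * S.emb w) = glnLen x w := by
  unfold AffineWeylSetup.len
  rw [S.lam_spec, S.fpart_spec]
  rw [Finset.sum_filter, Finset.sum_filter]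
  have hinj : ∀ p ∈ glnPS n, ∀ q ∈ glnPS n,
      stdE n p.1 - stdE n p.2 = stdE n q.1 - stdE n q.2 → p = q := by
    intro p hp q hq heq
    have hpne : p.1 ≠ p.2 := ne_of_lt (mem_glnPS.mp hp)
    have hqne : q.1 ≠ q.2 := ne_of_lt (mem_glnPS.mp hq)
    obtain ⟨h1, h2⟩ := gln_stdE_sub_inj hpne hqne heq
    exact Prod.ext h1 h2
  have hR : S.Rpos = (glnPS n).image (fun p => stdE n p.1 - stdE n p.2) := hgl.Rpos_eq
  rw [hR, Finset.sum_image hinj, Finset.sum_image hinj, ← Finset.sum_add_distrib]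
  unfold glnLen
  refine Finset.sum_congr rfl fun p hp => ?_
  have hlt := mem_glnPS.mp hp
  have hne : w⁻¹ p.1 ≠ w⁻¹ p.2 := fun h => ne_of_lt hlt (w⁻¹.injective h)
  have hmem : S.actY w⁻¹ (stdE n p.1 - stdE n p.2)
      ∈ (glnPS n).image (fun p => stdE n p.1 - stdE n p.2) ↔ w⁻¹ p.1 < w⁻¹ p.2 := by
    rw [← hR, gln_actY_stdE S hgl]
    exact gln_mem_Rpos S hgl
  rw [gln_pair_stdE S hgl]
  unfold glnTrm
  by_cases hc : w⁻¹ p.1 < w⁻¹ p.2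
  · rw [if_neg (by rw [hmem]; exact not_not_intro hc), if_pos (hmem.mpr hc),
      if_neg (not_lt.mpr (le_of_lt hc)), zero_add]
  · have hgt : w⁻¹ p.2 < w⁻¹ p.1 := lt_of_le_of_ne (not_lt.mp hc) (Ne.symm hne)
    rw [if_pos (by rw [hmem]; exact hc), if_neg (by rw [hmem]; exact hc), if_pos hgt, add_zero]

lemma gln_len_eq (hgl : IsGLn n S) (g : Wt) :
    S.len g = glnLen (S.lam g) (S.fpart g) := by
  conv_lhs => rw [S.decomp g]
  rw [gln_len_te S hgl]

end GlnAux

@[simp] lemma Equiv.Perm.inv_apply_self {α : Type*} (f : Equiv.Perm α) (x : α) : f⁻¹ (f x) = x :=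
  Equiv.Perm.inv_eq_iff_eq.mpr rfl

section GlnAux2
open AffineWeylSetup HeckeAlg

variable {n : ℕ} {Wt : Type} [Group Wt]

lemma gln_srt_mem {v : Equiv.Perm (Fin n)} {p : Fin n × Fin n} (hp : p ∈ glnPS n) :
    glnSrt v p ∈ glnPS n := by
  have hne : v p.1 ≠ v p.2 := fun h => ne_of_lt (mem_glnPS.mp hp) (v.injective h)
  unfold glnSrt
  split_ifs with h
  · exact mem_glnPS.mpr h
  · exact mem_glnPS.mpr (lt_of_le_of_ne (not_lt.mp h) (Ne.symm hne))

lemma gln_srt_srt {v : Equiv.Perm (Fin n)} {p : Fin n × Fin n} (hp : p ∈ glnPS n) :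
    glnSrt v⁻¹ (glnSrt v p) = p := by
  have hlt := mem_glnPS.mp hp
  unfold glnSrt
  by_cases h : v p.1 < v p.2
  · rw [if_pos h]
    simp only [Equiv.Perm.inv_apply_self]
    rw [if_pos hlt]
  · rw [if_neg h]
    simp only [Equiv.Perm.inv_apply_self]
    rw [if_neg (not_lt.mpr (le_of_lt hlt))]

/-- Reindexing the length sum along a permutation `v`. -/
lemma gln_sum_srt (f : Fin n × Fin n → ℕ) (v : Equiv.Perm (Fin n)) :
    ∑ p ∈ glnPS n, f (glnSrt v p) = ∑ p ∈ glnPS n, f p := by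
  refine Finset.sum_nbij' (glnSrt v) (glnSrt v⁻¹) (fun p hp => gln_srt_mem hp)
    (fun p hp => ?_) (fun p hp => gln_srt_srt hp) (fun p hp => ?_) (fun p hp => rfl)
  · have := gln_srt_mem (v := v⁻¹) hp
    simpa using this
  · have h1 := gln_srt_srt (v := v⁻¹) hp
    simpa using h1

/-- Pointwise comparison of terms, used both for `Ω`-elements and simple reflections. -/
lemma gln_trm_srt (z y : Fin n → ℤ) (v u : Equiv.Perm (Fin n)) (p : Fin n × Fin n)
    (hp : p ∈ glnPS n)
    (hcond : (v p.1 < v p.2 ∧ z (v p.1) = z (v p.2)) ∨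
      (v p.2 < v p.1 ∧ z (v p.2) = z (v p.1) + 1)) :
    glnTrm (fun i => z i + y (v⁻¹ i)) (v * u) (glnSrt v p) = glnTrm y u p := by
  have hlt := mem_glnPS.mp hp
  have hne : u⁻¹ p.1 ≠ u⁻¹ p.2 := fun h => ne_of_lt hlt (u⁻¹.injective h)
  unfold glnTrm glnSrt
  rcases hcond with ⟨hv, hz⟩ | ⟨hv, hz⟩
  · rw [if_pos hv]
    simp only [mul_inv_rev, Equiv.Perm.mul_apply, Equiv.Perm.inv_apply_self]
    split_ifs with h
    · omega
    · omega
  · rw [if_neg (not_lt.mpr (le_of_lt hv))]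
    simp only [mul_inv_rev, Equiv.Perm.mul_apply, Equiv.Perm.inv_apply_self]
    by_cases h : u⁻¹ p.1 < u⁻¹ p.2
    · rw [if_pos h, if_neg (not_lt.mpr (le_of_lt h))]
      omega
    · rw [if_neg h, if_pos (lt_of_le_of_ne (not_lt.mp h) (Ne.symm hne))]
      omega

/-- Master step lemma: multiplying `t_z v` on the left, with a single "defect" pair `q₀`. -/
lemma gln_step_master (z : Fin n → ℤ) (v : Equiv.Perm (Fin n)) (q₀ : Fin n × Fin n)
    (hq₀ : q₀ ∈ glnPS n)
    (hO : ∀ p ∈ glnPS n, p ≠ q₀ → (v p.1 < v p.2 ∧ z (v p.1) = z (v p.2)) ∨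
      (v p.2 < v p.1 ∧ z (v p.2) = z (v p.1) + 1))
    (y : Fin n → ℤ) (u : Equiv.Perm (Fin n)) :
    glnLen (fun i => z i + y (v⁻¹ i)) (v * u) + glnTrm y u q₀
      = glnLen y u + glnTrm (fun i => z i + y (v⁻¹ i)) (v * u) (glnSrt v q₀) := by
  unfold glnLen
  rw [← gln_sum_srt (glnTrm (fun i => z i + y (v⁻¹ i)) (v * u)) v]
  rw [← Finset.add_sum_erase _ _ hq₀, ← Finset.add_sum_erase _ (glnTrm y u) hq₀]
  have : ∑ p ∈ (glnPS n).erase q₀, glnTrm (fun i => z i + y (v⁻¹ i)) (v * u) (glnSrt v p)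
      = ∑ p ∈ (glnPS n).erase q₀, glnTrm y u p := by
    refine Finset.sum_congr rfl fun p hp => ?_
    have hmem := Finset.mem_of_mem_erase hp
    exact gln_trm_srt z y v u p hmem (hO p hmem (Finset.ne_of_mem_erase hp))
  rw [this]
  omega

/-- If `t_z v` has length zero then left multiplication preserves lengths. -/
lemma gln_len_zero_mul (z : Fin n → ℤ) (v : Equiv.Perm (Fin n))
    (hz : glnLen z v = 0) (y : Fin n → ℤ) (u : Equiv.Perm (Fin n)) :
    glnLen (fun i => z i + y (v⁻¹ i)) (v * u) = glnLen y u := by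
  have hall : ∀ p ∈ glnPS n, glnTrm z v p = 0 := by
    intro p hp
    exact (Finset.sum_eq_zero_iff.mp hz) p hp
  unfold glnLen
  rw [← gln_sum_srt (glnTrm (fun i => z i + y (v⁻¹ i)) (v * u)) v]
  refine Finset.sum_congr rfl fun p hp => ?_
  refine gln_trm_srt z y v u p hp ?_
  have hlt := mem_glnPS.mp hp
  have hne : v p.1 ≠ v p.2 := fun h => ne_of_lt hlt (v.injective h)
  rcases lt_or_gt_of_ne hne with h | h
  · left
    refine ⟨h, ?_⟩
    have hm : (v p.1, v p.2) ∈ glnPS n := mem_glnPS.mpr h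
    have := hall _ hm
    unfold glnTrm at this
    simp only [Equiv.Perm.inv_apply_self] at this
    rw [if_neg (not_lt.mpr (le_of_lt hlt))] at this
    omega
  · right
    refine ⟨h, ?_⟩
    have hm : (v p.2, v p.1) ∈ glnPS n := mem_glnPS.mpr h
    have := hall _ hm
    unfold glnTrm at this
    simp only [Equiv.Perm.inv_apply_self] at this
    rw [if_pos hlt] at this
    omega

end GlnAux2

section GlnAux3
open AffineWeylSetup HeckeAlg

variable {n : ℕ} {Wt : Type} [Group Wt]

lemma glnTrm_pair (y : Fin n → ℤ) (u : Equiv.Perm (Fin n)) (a b : Fin n) :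
    glnTrm y u (a, b)
      = if u⁻¹ b < u⁻¹ a then (y a - y b - 1).natAbs else (y a - y b).natAbs := rfl

lemma fin_mk_lt_iff {m : ℕ} (hm : m < n) {b : Fin n} : (⟨m, hm⟩ : Fin n) < b ↔ m < ↑b := Iff.rfl

lemma fin_lt_mk_iff {m : ℕ} (hm : m < n) {b : Fin n} : b < (⟨m, hm⟩ : Fin n) ↔ ↑b < m := Iff.rfl

lemma fin_eq_mk_iff {m : ℕ} (hm : m < n) {b : Fin n} : b = (⟨m, hm⟩ : Fin n) ↔ (b : ℕ) = m := by
  rw [Fin.ext_iff]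

lemma fin_le_mk_iff {m : ℕ} (hm : m < n) {b : Fin n} : b ≤ (⟨m, hm⟩ : Fin n) ↔ (b : ℕ) ≤ m :=
  Iff.rfl

lemma fin_mk_le_iff {m : ℕ} (hm : m < n) {b : Fin n} : (⟨m, hm⟩ : Fin n) ≤ b ↔ m ≤ (b : ℕ) :=
  Iff.rfl

/-- The simple reflection generators `s_{k+1}`, `0 ≤ k < n-1`. -/
def glnGenS (S : AffineWeylSetup (Fin n → ℤ) (Fin n → ℤ) (Equiv.Perm (Fin n)) Wt)
    (k : ℕ) (hk : k + 1 < n) : Wt :=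
  S.emb (Equiv.swap ⟨k, by omega⟩ ⟨k+1, hk⟩)

/-- The affine generator `s_0 = t_{e_1 - e_n} s_{(1 n)}`. -/
def glnGen0 (S : AffineWeylSetup (Fin n → ℤ) (Fin n → ℤ) (Equiv.Perm (Fin n)) Wt)
    (h2 : 2 ≤ n) : Wt :=
  S.t (stdE n ⟨0, by omega⟩ - stdE n ⟨n-1, by omega⟩) *
    S.emb (Equiv.swap ⟨0, by omega⟩ ⟨n-1, by omega⟩)

lemma gln_swap_adj_lt {k : ℕ} (hk : k + 1 < n) {a b : Fin n} (hab : a < b)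
    (hne : ¬(a = ⟨k, by omega⟩ ∧ b = ⟨k+1, hk⟩)) :
    Equiv.swap ⟨k, by omega⟩ ⟨k+1, hk⟩ a < Equiv.swap ⟨k, by omega⟩ ⟨k+1, hk⟩ b := by
  set kF : Fin n := ⟨k, by omega⟩ with hkF
  set kF1 : Fin n := ⟨k+1, hk⟩ with hkF1
  have hkk : kF < kF1 := by rw [hkF, hkF1]; exact Fin.mk_lt_mk.mpr (by omega)
  by_cases h1 : a = kF
  · by_cases h2 : b = kF1
    · exact absurd ⟨h1, h2⟩ hne
    · have hb1 : b ≠ kF := by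
        intro h; rw [h1, h] at hab; exact lt_irrefl _ hab
      rw [h1, Equiv.swap_apply_left, Equiv.swap_apply_of_ne_of_ne hb1 h2]
      -- goal : kF1 < b
      rw [hkF1, fin_mk_lt_iff]
      have hb2 : (b : ℕ) ≠ k + 1 := by
        intro h; exact h2 ((fin_eq_mk_iff hk).mpr h)
      have hb3 : k < (b : ℕ) := by
        rw [h1, hkF] at hab; exact (fin_mk_lt_iff (by omega)).mp hab
      omega
  · by_cases h1' : a = kF1
    · have hb1 : b ≠ kF := by
        intro h
        rw [h1', h] at hab
        exact absurd hab (not_lt.mpr (le_of_lt hkk))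
      have hb2 : b ≠ kF1 := by
        intro h; rw [h1', h] at hab; exact lt_irrefl _ hab
      rw [h1', Equiv.swap_apply_right, Equiv.swap_apply_of_ne_of_ne hb1 hb2]
      exact lt_trans hkk (h1' ▸ hab)
    · rw [Equiv.swap_apply_of_ne_of_ne h1 h1']
      by_cases h2 : b = kF
      · rw [h2, Equiv.swap_apply_left]
        exact lt_trans (h2 ▸ hab) hkk
      · by_cases h2' : b = kF1
        · rw [h2', Equiv.swap_apply_right, hkF, fin_lt_mk_iff]
          have ha1 : (a : ℕ) < k + 1 := by
            rw [h2', hkF1] at hab; exact (fin_lt_mk_iff hk).mp hab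
          have ha2 : (a : ℕ) ≠ k := by
            intro h; exact h1 ((fin_eq_mk_iff (by omega)).mpr h)
          omega
        · rw [Equiv.swap_apply_of_ne_of_ne h2 h2']
          exact hab

/-- Step lemma for the finite simple reflections. -/
lemma gln_step_genS (S : AffineWeylSetup (Fin n → ℤ) (Fin n → ℤ) (Equiv.Perm (Fin n)) Wt)
    (hgl : IsGLn n S) (k : ℕ) (hk : k + 1 < n) (g : Wt) :
    S.len (glnGenS S k hk * g)
      + glnTrm (S.lam g) (S.fpart g) (⟨k, by omega⟩, ⟨k+1, hk⟩)
    = S.len g + (if (S.fpart g)⁻¹ ⟨k, by omega⟩ < (S.fpart g)⁻¹ ⟨k+1, hk⟩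
        then (S.lam g ⟨k+1, hk⟩ - S.lam g ⟨k, by omega⟩ - 1).natAbs
        else (S.lam g ⟨k+1, hk⟩ - S.lam g ⟨k, by omega⟩).natAbs) := by
  set kF : Fin n := ⟨k, by omega⟩ with hkF
  set kF1 : Fin n := ⟨k+1, hk⟩ with hkF1
  set y := S.lam g
  set u := S.fpart g
  set v := Equiv.swap kF kF1 with hv
  set z : Fin n → ℤ := fun _ => 0 with hz
  have hkk : kF < kF1 := by rw [hkF, hkF1]; exact Fin.mk_lt_mk.mpr (by omega)
  have hq₀ : (kF, kF1) ∈ glnPS n := mem_glnPS.mpr hkk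
  have hmul : glnGenS S k hk * g = S.t (z + S.act v y) * S.emb (v * u) := by
    conv_lhs => rw [S.decomp g]
    unfold glnGenS
    have ht1 : S.t z = 1 := by
      have hzz : z = 0 := rfl
      rw [hzz, S.t_zero]
    have h0 : S.emb v = S.t z * S.emb v := by rw [ht1, one_mul]
    rw [← hv, h0, gln_te_mul]
  have hx : (z + S.act v y) = fun i => z i + y (v⁻¹ i) := by
    funext i
    simp [hgl.act_eq]
  have hO : ∀ p ∈ glnPS n, p ≠ (kF, kF1) →
      (v p.1 < v p.2 ∧ z (v p.1) = z (v p.2)) ∨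
      (v p.2 < v p.1 ∧ z (v p.2) = z (v p.1) + 1) := by
    intro p hp hne
    left
    refine ⟨?_, rfl⟩
    have hne' : ¬(p.1 = kF ∧ p.2 = kF1) := by
      intro ⟨e1, e2⟩
      exact hne (Prod.ext e1 e2)
    exact gln_swap_adj_lt hk (mem_glnPS.mp hp) hne'
  have hmaster := gln_step_master z v (kF, kF1) hq₀ hO y u
  rw [hmul, gln_len_te S hgl, hx, gln_len_eq S hgl g, hmaster]
  congr 1
  have hsrt : glnSrt v (kF, kF1) = (kF, kF1) := by
    unfold glnSrt
    rw [hv]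
    simp only [Equiv.swap_apply_left, Equiv.swap_apply_right]
    rw [if_neg (not_lt.mpr (le_of_lt hkk))]
  rw [hsrt, glnTrm_pair]
  have hvinv : v⁻¹ = v := Equiv.swap_inv kF kF1
  have hc1 : (v * u)⁻¹ kF1 = u⁻¹ kF := by
    rw [mul_inv_rev]
    simp only [Equiv.Perm.mul_apply, hvinv, hv, Equiv.swap_inv, Equiv.swap_apply_right]
  have hc2 : (v * u)⁻¹ kF = u⁻¹ kF1 := by
    rw [mul_inv_rev]
    simp only [Equiv.Perm.mul_apply, hvinv, hv, Equiv.swap_inv, Equiv.swap_apply_left]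
  have hx1 : z kF + y (v⁻¹ kF) = y kF1 := by
    simp only [hvinv, hv, hz, Equiv.swap_inv, Equiv.swap_apply_left, zero_add]
  have hx2 : z kF1 + y (v⁻¹ kF1) = y kF := by
    simp only [hvinv, hv, hz, Equiv.swap_inv, Equiv.swap_apply_right, zero_add]
  rw [hc1, hc2, hx1, hx2]

/-- Step lemma for the affine reflection. -/
lemma gln_step_gen0 (S : AffineWeylSetup (Fin n → ℤ) (Fin n → ℤ) (Equiv.Perm (Fin n)) Wt)
    (hgl : IsGLn n S) (h2 : 2 ≤ n) (g : Wt) :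
    S.len (glnGen0 S h2 * g)
      + glnTrm (S.lam g) (S.fpart g) (⟨0, by omega⟩, ⟨n-1, by omega⟩)
    = S.len g + (if (S.fpart g)⁻¹ ⟨0, by omega⟩ < (S.fpart g)⁻¹ ⟨n-1, by omega⟩
        then (S.lam g ⟨n-1, by omega⟩ - S.lam g ⟨0, by omega⟩ + 1).natAbs
        else (S.lam g ⟨n-1, by omega⟩ - S.lam g ⟨0, by omega⟩ + 2).natAbs) := by
  set aF : Fin n := ⟨0, by omega⟩ with haF
  set bF : Fin n := ⟨n-1, by omega⟩ with hbF
  set y := S.lam g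
  set u := S.fpart g
  set v := Equiv.swap aF bF with hv
  set z : Fin n → ℤ := stdE n aF - stdE n bF with hz
  have hab : aF < bF := by rw [haF, hbF]; exact Fin.mk_lt_mk.mpr (by omega)
  have hne : aF ≠ bF := ne_of_lt hab
  have hq₀ : (aF, bF) ∈ glnPS n := mem_glnPS.mpr hab
  have hza : z aF = 1 := gln_stdE_sub_self hne
  have hzb : z bF = -1 := gln_stdE_sub_self' hne
  have hzo : ∀ c : Fin n, c ≠ aF → c ≠ bF → z c = 0 := by
    intro c hc1 hc2
    rw [hz, gln_stdE_sub_apply, if_neg hc1, if_neg hc2]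
    ring
  have hmul : glnGen0 S h2 * g = S.t (z + S.act v y) * S.emb (v * u) := by
    conv_lhs => rw [S.decomp g]
    unfold glnGen0
    rw [← haF, ← hbF, ← hz, ← hv, gln_te_mul]
  have hx : (z + S.act v y) = fun i => z i + y (v⁻¹ i) := by
    funext i
    simp [hgl.act_eq]
  have hO : ∀ p ∈ glnPS n, p ≠ (aF, bF) →
      (v p.1 < v p.2 ∧ z (v p.1) = z (v p.2)) ∨
      (v p.2 < v p.1 ∧ z (v p.2) = z (v p.1) + 1) := by
    intro p hp hnep
    have hplt := mem_glnPS.mp hp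
    have hne' : ¬(p.1 = aF ∧ p.2 = bF) := by
      intro ⟨e1, e2⟩
      exact hnep (Prod.ext e1 e2)
    have hleb : ∀ c : Fin n, c ≤ bF := by
      intro c
      rw [hbF, fin_le_mk_iff]
      have := c.isLt
      omega
    have hgea : ∀ c : Fin n, aF ≤ c := by
      intro c
      rw [haF, fin_mk_le_iff]
      omega
    by_cases hp1 : p.1 = aF
    · have hp2' : p.2 ≠ bF := fun h => hne' ⟨hp1, h⟩
      have hp2'' : p.2 ≠ aF := by
        intro h
        rw [hp1, h] at hplt
        exact lt_irrefl _ hplt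
      right
      rw [hp1, Equiv.swap_apply_left, Equiv.swap_apply_of_ne_of_ne hp2'' hp2']
      exact ⟨lt_of_le_of_ne (hleb p.2) hp2', by rw [hzo p.2 hp2'' hp2', hzb]; ring⟩
    · by_cases hp2 : p.2 = bF
      · have hp1'' : p.1 ≠ bF := by
          intro h
          rw [h, hp2] at hplt
          exact lt_irrefl _ hplt
        right
        rw [hp2, Equiv.swap_apply_right, Equiv.swap_apply_of_ne_of_ne hp1 hp1'']
        exact ⟨lt_of_le_of_ne (hgea p.1) (Ne.symm hp1),
          by rw [hzo p.1 hp1 hp1'', hza]; ring⟩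
      · have hp1'' : p.1 ≠ bF := by
          intro h
          exact hp2 (le_antisymm (hleb p.2) (h ▸ le_of_lt hplt))
        have hp2'' : p.2 ≠ aF := by
          intro h
          have := lt_of_lt_of_le (h ▸ hplt) (hgea p.1)
          exact absurd this (lt_irrefl _)
        left
        rw [Equiv.swap_apply_of_ne_of_ne hp1 hp1'', Equiv.swap_apply_of_ne_of_ne hp2'' hp2]
        exact ⟨hplt, by rw [hzo p.1 hp1 hp1'', hzo p.2 hp2'' hp2]⟩
  have hmaster := gln_step_master z v (aF, bF) hq₀ hO y u
  rw [hmul, gln_len_te S hgl, hx, gln_len_eq S hgl g, hmaster]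
  congr 1
  have hsrt : glnSrt v (aF, bF) = (aF, bF) := by
    unfold glnSrt
    rw [hv]
    simp only [Equiv.swap_apply_left, Equiv.swap_apply_right]
    rw [if_neg (not_lt.mpr (le_of_lt hab))]
  rw [hsrt, glnTrm_pair]
  have hvinv : v⁻¹ = v := Equiv.swap_inv aF bF
  have hc1 : (v * u)⁻¹ bF = u⁻¹ aF := by
    rw [mul_inv_rev]
    simp only [Equiv.Perm.mul_apply, hvinv, hv, Equiv.swap_inv, Equiv.swap_apply_right]
  have hc2 : (v * u)⁻¹ aF = u⁻¹ bF := by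
    rw [mul_inv_rev]
    simp only [Equiv.Perm.mul_apply, hvinv, hv, Equiv.swap_inv, Equiv.swap_apply_left]
  have hx1 : z aF + y (v⁻¹ aF) = 1 + y bF := by
    rw [hza]
    simp only [hvinv, hv, Equiv.swap_inv, Equiv.swap_apply_left]
  have hx2 : z bF + y (v⁻¹ bF) = -1 + y aF := by
    rw [hzb]
    simp only [hvinv, hv, Equiv.swap_inv, Equiv.swap_apply_right]
  rw [hc1, hc2, hx1, hx2]
  split_ifs with h
  · congr 1; ring
  · congr 1; ring

end GlnAux3

section GlnAux4
open AffineWeylSetup HeckeAlg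

variable {n : ℕ} {Wt : Type} [Group Wt]

/-- The predicate "is one of our concrete affine generators". -/
def glnIsGen (S : AffineWeylSetup (Fin n → ℤ) (Fin n → ℤ) (Equiv.Perm (Fin n)) Wt)
    (p : Wt) : Prop :=
  (∃ k, ∃ hk : k + 1 < n, p = glnGenS S k hk) ∨ (∃ h2 : 2 ≤ n, p = glnGen0 S h2)

variable (S : AffineWeylSetup (Fin n → ℤ) (Fin n → ℤ) (Equiv.Perm (Fin n)) Wt)

lemma gln_lam_one : S.lam 1 = 0 := by
  conv_lhs => rw [gln_one_eq S]
  exact S.lam_spec 0 1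

lemma gln_fpart_one : S.fpart 1 = 1 := by
  conv_lhs => rw [gln_one_eq S]
  exact S.fpart_spec 0 1

lemma gln_len_one_elt (hgl : IsGLn n S) : S.len (1 : Wt) = 0 := by
  rw [gln_len_eq S hgl, gln_lam_one, gln_fpart_one]
  refine Finset.sum_eq_zero fun p hp => ?_
  unfold glnTrm
  rw [if_neg, Pi.zero_apply, Pi.zero_apply, sub_self, Int.natAbs_zero]
  simp only [inv_one, Equiv.Perm.one_apply]
  exact not_lt.mpr (le_of_lt (mem_glnPS.mp hp))

lemma gln_gen_sq (hgl : IsGLn n S) {p : Wt} (hp : glnIsGen S p) : p * p = 1 := by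
  rcases hp with ⟨k, hk, rfl⟩ | ⟨h2, rfl⟩
  · unfold glnGenS
    rw [← map_mul, Equiv.swap_mul_self, map_one]
  · unfold glnGen0
    set aF : Fin n := ⟨0, by omega⟩ with haF
    set bF : Fin n := ⟨n-1, by omega⟩ with hbF
    set v := Equiv.swap aF bF with hv
    set z : Fin n → ℤ := stdE n aF - stdE n bF with hz
    rw [gln_te_mul]
    have hnegz : S.act v z = -z := by
      funext i
      rw [hgl.act_eq]
      have hvi : v⁻¹ = v := Equiv.swap_inv aF bF
      rw [hvi, Pi.neg_apply, hz, gln_stdE_sub_apply, gln_stdE_sub_apply]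
      have e1 : (v i = aF) = (i = bF) := by
        apply propext
        constructor
        · intro h
          have := congrArg v h
          rwa [hv, Equiv.swap_apply_self, Equiv.swap_apply_left] at this
        · intro h; rw [h, hv, Equiv.swap_apply_right]
      have e2 : (v i = bF) = (i = aF) := by
        apply propext
        constructor
        · intro h
          have := congrArg v h
          rwa [hv, Equiv.swap_apply_self, Equiv.swap_apply_right] at this
        · intro h; rw [h, hv, Equiv.swap_apply_left]
      simp only [e1, e2]
      ring
    rw [hnegz]
    have : z + -z = 0 := by ring
    rw [this, S.t_zero, hv, Equiv.swap_mul_self, map_one, one_mul]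

lemma gln_gen_pm (hgl : IsGLn n S) {p : Wt} (hp : glnIsGen S p) (g : Wt) :
    S.len (p * g) + 1 = S.len g ∨ S.len (p * g) = S.len g + 1 := by
  rcases hp with ⟨k, hk, rfl⟩ | ⟨h2, rfl⟩
  · have h := gln_step_genS S hgl k hk g
    rw [glnTrm_pair] at h
    set u := S.fpart g
    have hne : u⁻¹ ⟨k, by omega⟩ ≠ u⁻¹ ⟨k+1, hk⟩ := by
      intro hc
      have := u⁻¹.injective hc
      rw [Fin.mk.injEq] at this
      omega
    rcases lt_or_gt_of_ne hne with hc | hc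
    · rw [if_neg (not_lt.mpr (le_of_lt hc)), if_pos hc] at h
      omega
    · rw [if_pos hc, if_neg (not_lt.mpr (le_of_lt hc))] at h
      omega
  · have h := gln_step_gen0 S hgl h2 g
    rw [glnTrm_pair] at h
    set u := S.fpart g
    have hne : u⁻¹ ⟨0, by omega⟩ ≠ u⁻¹ ⟨n-1, by omega⟩ := by
      intro hc
      have := u⁻¹.injective hc
      rw [Fin.mk.injEq] at this
      omega
    rcases lt_or_gt_of_ne hne with hc | hc
    · rw [if_neg (not_lt.mpr (le_of_lt hc)), if_pos hc] at h
      omega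
    · rw [if_pos hc, if_neg (not_lt.mpr (le_of_lt hc))] at h
      omega

lemma gln_gen_len_one (hgl : IsGLn n S) {p : Wt} (hp : glnIsGen S p) : S.len p = 1 := by
  have hyz : S.lam (1 : Wt) = 0 := gln_lam_one S
  have hfz : S.fpart (1 : Wt) = 1 := gln_fpart_one S
  rcases hp with ⟨k, hk, rfl⟩ | ⟨h2, rfl⟩
  · have h := gln_step_genS S hgl k hk 1
    rw [glnTrm_pair, mul_one, gln_len_one_elt S hgl, hyz, hfz] at h
    simp only [inv_one, Equiv.Perm.one_apply, Pi.zero_apply] at h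
    rw [if_neg (by rw [Fin.mk_lt_mk]; omega), if_pos (Fin.mk_lt_mk.mpr (by omega))] at h
    simpa using h
  · have h := gln_step_gen0 S hgl h2 1
    rw [glnTrm_pair, mul_one, gln_len_one_elt S hgl, hyz, hfz] at h
    simp only [inv_one, Equiv.Perm.one_apply, Pi.zero_apply] at h
    rw [if_neg (by rw [Fin.mk_lt_mk]; omega), if_pos (Fin.mk_lt_mk.mpr (by omega))] at h
    simpa using h

end GlnAux4

section GlnAux5
open AffineWeylSetup HeckeAlg

variable {n : ℕ}

/-- Core combinatorial lemma: if there is no descent at any affine simple reflection,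
then the length is zero. -/
lemma gln_no_descent_core (y : Fin n → ℤ) (u : Equiv.Perm (Fin n)) (h2 : 2 ≤ n)
    (hadj1 : ∀ k (hk : k + 1 < n), u⁻¹ ⟨k, by omega⟩ < u⁻¹ ⟨k+1, hk⟩ →
      0 ≤ y ⟨k, by omega⟩ - y ⟨k+1, hk⟩)
    (hadj2 : ∀ k (hk : k + 1 < n), u⁻¹ ⟨k+1, hk⟩ < u⁻¹ ⟨k, by omega⟩ →
      1 ≤ y ⟨k, by omega⟩ - y ⟨k+1, hk⟩)
    (hA : u⁻¹ ⟨0, by omega⟩ < u⁻¹ ⟨n-1, by omega⟩ →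
      y ⟨0, by omega⟩ - y ⟨n-1, by omega⟩ ≤ 0)
    (hB : u⁻¹ ⟨n-1, by omega⟩ < u⁻¹ ⟨0, by omega⟩ →
      y ⟨0, by omega⟩ - y ⟨n-1, by omega⟩ ≤ 1) :
    glnLen y u = 0 := by
  set Y : ℕ → ℤ := fun m => if hm : m < n then y ⟨m, hm⟩ else 0 with hYdef
  set U : ℕ → ℕ := fun m => if hm : m < n then ((u⁻¹ ⟨m, hm⟩ : Fin n) : ℕ) else 0 with hUdef
  have hYk : ∀ (m : ℕ) (hm : m < n), Y m = y ⟨m, hm⟩ := by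
    intro m hm; rw [hYdef]; exact dif_pos hm
  have hUk : ∀ (m : ℕ) (hm : m < n), U m = ((u⁻¹ ⟨m, hm⟩ : Fin n) : ℕ) := by
    intro m hm; rw [hUdef]; exact dif_pos hm
  have hYa : ∀ a : Fin n, Y (a : ℕ) = y a := fun a => hYk _ a.isLt
  have hUa : ∀ a : Fin n, U (a : ℕ) = ((u⁻¹ a : Fin n) : ℕ) := fun a => hUk _ a.isLt
  have ha1 : ∀ k, k + 1 < n → U k < U (k+1) → 0 ≤ Y k - Y (k+1) := by
    intro k hk h
    rw [hUk k (by omega), hUk (k+1) hk] at h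
    rw [hYk k (by omega), hYk (k+1) hk]
    exact hadj1 k hk (Fin.lt_def.mpr h)
  have ha2 : ∀ k, k + 1 < n → U (k+1) < U k → 1 ≤ Y k - Y (k+1) := by
    intro k hk h
    rw [hUk k (by omega), hUk (k+1) hk] at h
    rw [hYk k (by omega), hYk (k+1) hk]
    exact hadj2 k hk (Fin.lt_def.mpr h)
  have hane : ∀ k, k + 1 < n → U k ≠ U (k+1) := by
    intro k hk h
    rw [hUk k (by omega), hUk (k+1) hk] at h
    have h' : u⁻¹ ⟨k, by omega⟩ = u⁻¹ ⟨k+1, hk⟩ := Fin.val_injective h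
    have h'' := u⁻¹.injective h'
    rw [Fin.mk.injEq] at h''
    omega
  have hYadj : ∀ k, k + 1 < n → 0 ≤ Y k - Y (k+1) := by
    intro k hk
    rcases lt_or_gt_of_ne (hane k hk) with h | h
    · exact ha1 k hk h
    · have := ha2 k hk h; omega
  have hchain : ∀ m a, a + m < n → Y (a + m) ≤ Y a := by
    intro m
    induction m with
    | zero => intro a _; simp
    | succ m ih =>
      intro a ha
      have h1 := ih a (by omega)
      have h2 := hYadj (a + m) (by omega)
      have e : a + (m + 1) = (a + m) + 1 := by omega
      rw [e]
      omega
  have hge : ∀ a b, a ≤ b → b < n → Y b ≤ Y a := by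
    intro a b hab hbn
    have h := hchain (b - a) a (by omega)
    have e : a + (b - a) = b := by omega
    rwa [e] at h
  have htwo : ∀ k1 k2, k1 < k2 → k2 + 1 < n →
      1 ≤ Y k1 - Y (k1+1) → 1 ≤ Y k2 - Y (k2+1) → Y (n-1) + 2 ≤ Y 0 := by
    intro k1 k2 h12 hk2 hd1 hd2
    have h1 := hge 0 k1 (Nat.zero_le _) (by omega)
    have h2 := hge (k1+1) k2 (by omega) (by omega)
    have h3 := hge (k2+1) (n-1) (by omega) (by omega)
    omega
  have hUrun : ∀ m a, a + m < n → (∀ k, a ≤ k → k < a + m → U k < U (k+1)) →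
      U a ≤ U (a + m) ∧ (0 < m → U a < U (a + m)) := by
    intro m
    induction m with
    | zero => intro a _ _; exact ⟨le_refl _, fun h => absurd h (lt_irrefl 0)⟩
    | succ m ih =>
      intro a ha hasc
      have h1 := ih a (by omega) (fun k hk1 hk2 => hasc k hk1 (by omega))
      have h2 := hasc (a + m) (by omega) (by omega)
      have e : a + (m + 1) = (a + m) + 1 := by omega
      rw [e]
      exact ⟨by omega, fun _ => by omega⟩
  have hYrun : ∀ m a, a + m < n → (∀ k, a ≤ k → k < a + m → Y k = Y (k+1)) →
      Y a = Y (a + m) := by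
    intro m
    induction m with
    | zero => intro a _ _; rfl
    | succ m ih =>
      intro a ha heq
      have h1 := ih a (by omega) (fun k hk1 hk2 => heq k hk1 (by omega))
      have h2 := heq (a + m) (by omega) (by omega)
      have e : a + (m + 1) = (a + m) + 1 := by omega
      rw [e, ← h2, h1]
  have hUne : U 0 ≠ U (n-1) := by
    rw [hUk 0 (by omega), hUk (n-1) (by omega)]
    intro h
    have h' := u⁻¹.injective (Fin.val_injective h)
    rw [Fin.mk.injEq] at h'
    omega
  suffices hall : ∀ p ∈ glnPS n, glnTrm y u p = 0 by
    exact Finset.sum_eq_zero hall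
  have hterm0 : ∀ (a b : Fin n), ¬(u⁻¹ b < u⁻¹ a) → y a = y b → glnTrm y u (a, b) = 0 := by
    intro a b hc hyy
    rw [glnTrm_pair, if_neg hc, hyy, sub_self, Int.natAbs_zero]
  have hterm1 : ∀ (a b : Fin n), u⁻¹ b < u⁻¹ a → y a - y b = 1 → glnTrm y u (a, b) = 0 := by
    intro a b hc hyy
    rw [glnTrm_pair, if_pos hc, hyy, sub_self, Int.natAbs_zero]
  rcases lt_or_gt_of_ne hUne with hcase | hcase
  · -- Case A : U 0 < U (n-1)
    have hA' : Y 0 - Y (n-1) ≤ 0 := by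
      rw [hYk 0 (by omega), hYk (n-1) (by omega)]
      apply hA
      rw [hUk 0 (by omega), hUk (n-1) (by omega)] at hcase
      exact Fin.lt_def.mpr hcase
    have hasc : ∀ k, k + 1 < n → U k < U (k+1) ∧ Y k = Y (k+1) := by
      intro k hk
      rcases lt_or_gt_of_ne (hane k hk) with h | h
      · refine ⟨h, ?_⟩
        have ha := ha1 k hk h
        have hb := hge 0 k (Nat.zero_le _) (by omega)
        have hc := hge (k+1) (n-1) (by omega) (by omega)
        omega
      · exfalso
        have hd := ha2 k hk h
        have hb := hge 0 k (Nat.zero_le _) (by omega)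
        have hc := hge (k+1) (n-1) (by omega) (by omega)
        omega
    intro p hp
    obtain ⟨a, b⟩ := p
    have hab : a < b := mem_glnPS.mp hp
    have hvab : (a : ℕ) < (b : ℕ) := Fin.lt_def.mp hab
    have hbn := b.isLt
    have hub : U (a : ℕ) < U (b : ℕ) := by
      have h := hUrun ((b : ℕ) - (a : ℕ)) (a : ℕ) (by omega)
        (fun k hk1 hk2 => (hasc k (by omega)).1)
      have e : (a : ℕ) + ((b : ℕ) - (a : ℕ)) = (b : ℕ) := by omega
      rw [e] at h
      exact h.2 (by omega)
    have hyy : Y (a : ℕ) = Y (b : ℕ) := by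
      have h := hYrun ((b : ℕ) - (a : ℕ)) (a : ℕ) (by omega)
        (fun k hk1 hk2 => (hasc k (by omega)).2)
      have e : (a : ℕ) + ((b : ℕ) - (a : ℕ)) = (b : ℕ) := by omega
      rwa [e] at h
    refine hterm0 a b ?_ ?_
    · intro hc
      rw [hUa a, hUa b] at hub
      exact absurd (Fin.lt_def.mp hc) (by omega)
    · rw [hYa a, hYa b] at hyy
      exact hyy
  · -- Case B : U (n-1) < U 0
    have hB' : Y 0 - Y (n-1) ≤ 1 := by
      rw [hYk 0 (by omega), hYk (n-1) (by omega)]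
      apply hB
      rw [hUk 0 (by omega), hUk (n-1) (by omega)] at hcase
      exact Fin.lt_def.mpr hcase
    have hex : ∃ k0, k0 + 1 < n ∧ U (k0+1) < U k0 := by
      by_contra hcon
      push_neg at hcon
      have hasc : ∀ k, 0 ≤ k → k < 0 + (n-1) → U k < U (k+1) := by
        intro k _ hk
        have hk' : k + 1 < n := by omega
        rcases lt_or_gt_of_ne (hane k hk') with h | h
        · exact h
        · exact absurd h (not_lt.mpr (hcon k hk'))
      have h := (hUrun (n-1) 0 (by omega) hasc).2 (by omega)
      have e : 0 + (n-1) = n-1 := by omega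
      rw [e] at h
      omega
    obtain ⟨k0, hk0n, hk0d⟩ := hex
    have hdrop0 : 1 ≤ Y k0 - Y (k0+1) := ha2 k0 hk0n hk0d
    have hflat : ∀ k, k + 1 < n → k ≠ k0 → U k < U (k+1) ∧ Y k = Y (k+1) := by
      intro k hk hkne
      have hnodrop : ¬ (1 ≤ Y k - Y (k+1)) := by
        intro hd
        rcases Nat.lt_or_ge k k0 with h | h
        · have := htwo k k0 (by omega) hk0n hd hdrop0
          omega
        · have hlt : k0 < k := lt_of_le_of_ne h (Ne.symm hkne)
          have := htwo k0 k hlt hk hdrop0 hd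
          omega
      rcases lt_or_gt_of_ne (hane k hk) with h | h
      · refine ⟨h, ?_⟩
        have := ha1 k hk h
        omega
      · exact absurd (ha2 k hk h) hnodrop
    have hdropeq : Y k0 - Y (k0+1) = 1 := by
      have h1 := hge 0 k0 (Nat.zero_le _) (by omega)
      have h2 := hge (k0+1) (n-1) (by omega) (by omega)
      omega
    have hUrunB : ∀ a b : ℕ, a ≤ b → b < n → (b ≤ k0 ∨ k0 < a) →
        U a ≤ U b ∧ (a < b → U a < U b) := by
      intro a b hab hbn hside
      have h := hUrun (b - a) a (by omega) ?side
      case side =>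
        intro k hk1 hk2
        refine (hflat k (by omega) ?_).1
        rcases hside with h | h <;> omega
      have e : a + (b - a) = b := by omega
      rw [e] at h
      exact ⟨h.1, fun hlt => h.2 (by omega)⟩
    have hYrunB : ∀ a b : ℕ, a ≤ b → b < n → (b ≤ k0 ∨ k0 < a) → Y a = Y b := by
      intro a b hab hbn hside
      have h := hYrun (b - a) a (by omega) ?side
      case side =>
        intro k hk1 hk2
        refine (hflat k (by omega) ?_).2
        rcases hside with h | h <;> omega
      have e : a + (b - a) = b := by omega
      rwa [e] at h
    intro p hp
    obtain ⟨a, b⟩ := p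
    have hab : a < b := mem_glnPS.mp hp
    have hvab : (a : ℕ) < (b : ℕ) := Fin.lt_def.mp hab
    have hbn := b.isLt
    rcases Nat.lt_or_ge k0 (a : ℕ) with hc1 | hc1
    · -- k0 < a
      have hub := (hUrunB (a : ℕ) (b : ℕ) (le_of_lt hvab) hbn (Or.inr hc1)).2 hvab
      have hyy := hYrunB (a : ℕ) (b : ℕ) (le_of_lt hvab) hbn (Or.inr hc1)
      refine hterm0 a b ?_ ?_
      · intro hc
        rw [hUa a, hUa b] at hub
        exact absurd (Fin.lt_def.mp hc) (by omega)
      · rw [hYa a, hYa b] at hyy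
        exact hyy
    · rcases Nat.lt_or_ge k0 (b : ℕ) with hc2 | hc2
      · -- a ≤ k0 < b : crossing pair
        have hy1 : Y (a : ℕ) = Y k0 := hYrunB (a : ℕ) k0 hc1 (by omega) (Or.inl (le_refl _))
        have hy2 : Y (k0+1) = Y (b : ℕ) := hYrunB (k0+1) (b : ℕ) (by omega) hbn (Or.inr (by omega))
        have hu1 : U 0 ≤ U (a : ℕ) := (hUrunB 0 (a : ℕ) (Nat.zero_le _) (by omega) (Or.inl hc1)).1
        have hu2 : U (b : ℕ) ≤ U (n-1) := (hUrunB (b : ℕ) (n-1) (by omega) (by omega) (Or.inr hc2)).1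
        refine hterm1 a b ?_ ?_
        · have h : U (b : ℕ) < U (a : ℕ) := by omega
          rw [hUa a, hUa b] at h
          exact Fin.lt_def.mpr h
        · have h : Y (a : ℕ) - Y (b : ℕ) = 1 := by omega
          rw [hYa a, hYa b] at h
          exact h
      · -- b ≤ k0
        have hub := (hUrunB (a : ℕ) (b : ℕ) (le_of_lt hvab) hbn (Or.inl hc2)).2 hvab
        have hyy := hYrunB (a : ℕ) (b : ℕ) (le_of_lt hvab) hbn (Or.inl hc2)
        refine hterm0 a b ?_ ?_
        · intro hc
          rw [hUa a, hUa b] at hub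
          exact absurd (Fin.lt_def.mp hc) (by omega)
        · rw [hYa a, hYa b] at hyy
          exact hyy

end GlnAux5

section GlnAux6
open AffineWeylSetup HeckeAlg

variable {n : ℕ} {Wt : Type} [Group Wt]
variable (S : AffineWeylSetup (Fin n → ℤ) (Fin n → ℤ) (Equiv.Perm (Fin n)) Wt)

lemma gln_exists_descent (hgl : IsGLn n S) (g : Wt) (hg : 0 < S.len g) :
    ∃ p, glnIsGen S p ∧ S.len (p * g) + 1 = S.len g := by
  by_contra hno
  push_neg at hno
  set y := S.lam g with hy
  set u := S.fpart g with hu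
  have hlen : S.len g = glnLen y u := gln_len_eq S hgl g
  have hpos : 0 < glnLen y u := hlen ▸ hg
  obtain ⟨q, hq, hqpos⟩ : ∃ q ∈ glnPS n, glnTrm y u q ≠ 0 := by
    by_contra hcon
    push_neg at hcon
    have h0 : glnLen y u = 0 := Finset.sum_eq_zero hcon
    omega
  have h2 : 2 ≤ n := by
    have hlt := Fin.lt_def.mp (mem_glnPS.mp hq)
    have := q.2.isLt
    omega
  have hup : ∀ p, glnIsGen S p → S.len (p * g) = S.len g + 1 := by
    intro p hp
    rcases gln_gen_pm S hgl hp g with h | h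
    · exact absurd h (hno p hp)
    · exact h
  have hzero : glnLen y u = 0 := by
    apply gln_no_descent_core y u h2
    · -- hadj1
      intro k hk huu
      have hst := gln_step_genS S hgl k hk g
      rw [glnTrm_pair, hup _ (Or.inl ⟨k, hk, rfl⟩), ← hy, ← hu] at hst
      rw [if_pos huu, if_neg (not_lt.mpr (le_of_lt huu))] at hst
      omega
    · -- hadj2
      intro k hk huu
      have hst := gln_step_genS S hgl k hk g
      rw [glnTrm_pair, hup _ (Or.inl ⟨k, hk, rfl⟩), ← hy, ← hu] at hst
      rw [if_neg (not_lt.mpr (le_of_lt huu)), if_pos huu] at hst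
      omega
    · -- hA
      intro huu
      have hst := gln_step_gen0 S hgl h2 g
      rw [glnTrm_pair, hup _ (Or.inr ⟨h2, rfl⟩), ← hy, ← hu] at hst
      rw [if_pos huu, if_neg (not_lt.mpr (le_of_lt huu))] at hst
      omega
    · -- hB
      intro huu
      have hst := gln_step_gen0 S hgl h2 g
      rw [glnTrm_pair, hup _ (Or.inr ⟨h2, rfl⟩), ← hy, ← hu] at hst
      rw [if_neg (not_lt.mpr (le_of_lt huu)), if_pos huu] at hst
      omega
  omega

/-- Existence of reduced words: every `g` is a product of `len g` generators and a
length-zero element. -/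
lemma gln_word_exists (hgl : IsGLn n S) (N : ℕ) :
    ∀ g : Wt, S.len g ≤ N → ∃ (L : List Wt) (τ : Wt),
      (∀ p ∈ L, glnIsGen S p) ∧ S.len τ = 0 ∧ g = L.prod * τ ∧ L.length = S.len g := by
  induction N with
  | zero =>
    intro g hg
    exact ⟨[], g, fun p hp => absurd hp (List.not_mem_nil (a := p)), by omega, by simp, by simp [Nat.le_zero.mp hg]⟩
  | succ N ih =>
    intro g hg
    by_cases h0 : S.len g = 0
    · exact ⟨[], g, fun p hp => absurd hp (List.not_mem_nil (a := p)), h0, by simp, by simp [h0]⟩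
    · obtain ⟨p, hp, hdesc⟩ := gln_exists_descent S hgl g (by omega)
      obtain ⟨L, τ, hL, hτ, hprod, hlen⟩ := ih (p * g) (by omega)
      refine ⟨p :: L, τ, ?_, hτ, ?_, ?_⟩
      · intro q hq
        rcases List.mem_cons.mp hq with h | h
        · exact h ▸ hp
        · exact hL q h
      · rw [List.prod_cons, mul_assoc, ← hprod, ← mul_assoc, gln_gen_sq S hgl hp, one_mul]
      · simp only [List.length_cons, hlen]
        omega

end GlnAux6

section GlnAux7
open AffineWeylSetup HeckeAlg

variable {n : ℕ} {Wt : Type} [Group Wt]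

/-- The partial-sum functional `x ↦ ∑_{i ≤ t} x_i`. -/
def glnPhi (t : ℕ) (x : Fin n → ℤ) : ℤ := ∑ i : Fin n, if (i : ℕ) ≤ t then x i else 0

lemma glnPhi_sub (t : ℕ) (x y : Fin n → ℤ) : glnPhi t (x - y) = glnPhi t x - glnPhi t y := by
  unfold glnPhi
  rw [← Finset.sum_sub_distrib]
  refine Finset.sum_congr rfl fun i _ => ?_
  rw [Pi.sub_apply]
  split_ifs <;> ring

lemma glnPhi_sum (t : ℕ) (s : Finset ℕ) (F : ℕ → Fin n → ℤ) :
    glnPhi t (∑ j ∈ s, F j) = ∑ j ∈ s, glnPhi t (F j) := by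
  unfold glnPhi
  rw [Finset.sum_comm]
  refine Finset.sum_congr rfl fun i _ => ?_
  rw [Finset.sum_apply]
  split_ifs with h
  · rfl
  · exact (Finset.sum_eq_zero fun j _ => rfl).symm

lemma glnPhi_smul (t : ℕ) (c : ℤ) (x : Fin n → ℤ) : glnPhi t (c • x) = c * glnPhi t x := by
  unfold glnPhi
  rw [Finset.mul_sum]
  refine Finset.sum_congr rfl fun i _ => ?_
  rw [Pi.smul_apply, smul_eq_mul]
  split_ifs <;> ring

lemma glnPhi_stdE (t : ℕ) (a : Fin n) :
    glnPhi t (stdE n a) = if (a : ℕ) ≤ t then 1 else 0 := by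
  unfold glnPhi stdE
  rw [show (∑ i : Fin n, if (i : ℕ) ≤ t then (if i = a then (1:ℤ) else 0) else 0)
      = ∑ i : Fin n, if i = a then (if (a : ℕ) ≤ t then (1:ℤ) else 0) else 0 from
    Finset.sum_congr rfl fun i _ => by
      by_cases hia : i = a
      · subst hia; split_ifs <;> rfl
      · simp [hia]]
  rw [Finset.sum_ite_eq' Finset.univ a (fun _ => if (a : ℕ) ≤ t then (1:ℤ) else 0)]
  simp

lemma gln_eN_eq_stdE {j : ℕ} (hj : j < n) : eN n j = stdE n ⟨j, hj⟩ := by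
  funext i
  unfold eN stdE
  have e : (i = ⟨j, hj⟩) = ((i : ℕ) = j) := propext (fin_eq_mk_iff hj)
  simp only [e]

lemma glnPhi_eN (t : ℕ) {j : ℕ} (hj : j < n) :
    glnPhi t (eN n j) = if j ≤ t then 1 else 0 := by
  rw [gln_eN_eq_stdE hj, glnPhi_stdE]

lemma gln_eN_sub_inj (n : ℕ) : ∀ j ∈ Finset.range (n-1), ∀ j' ∈ Finset.range (n-1),
    eN n j - eN n (j+1) = eN n j' - eN n (j'+1) → j = j' := by
  intro j hj j' hj'
  rw [Finset.mem_range] at hj hj'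
  intro heq
  by_contra hne
  have := congrFun heq ⟨j, by omega⟩
  rw [Pi.sub_apply, Pi.sub_apply] at this
  unfold eN at this
  simp only [] at this
  split_ifs at this <;> omega

variable (S : AffineWeylSetup (Fin n → ℤ) (Fin n → ℤ) (Equiv.Perm (Fin n)) Wt)

lemma gln_genS_mem_Sa (hgl : IsGLn n S) (k : ℕ) (hk : k + 1 < n) :
    glnGenS S k hk ∈ S.Sa := by
  apply Set.mem_union_left
  refine ⟨eN n k - eN n (k+1), ?_, ?_⟩
  · exact Finset.mem_coe.mpr (hgl.Pi_eq ▸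
      Finset.mem_image.mpr ⟨k, Finset.mem_range.mpr (by omega), rfl⟩)
  · show S.emb (S.sref (eN n k - eN n (k+1))) = glnGenS S k hk
    rw [gln_eN_eq_stdE (show k < n by omega), gln_eN_eq_stdE hk,
      hgl.sref_eq ⟨k, by omega⟩ ⟨k+1, hk⟩ (by intro h; rw [Fin.mk.injEq] at h; omega)]
    rfl

lemma gln_lowest_mem_Pim (hgl : IsGLn n S) (h2 : 2 ≤ n) :
    (stdE n ⟨n-1, by omega⟩ - stdE n ⟨0, by omega⟩) ∈ S.Pim := by
  set bF : Fin n := ⟨n-1, by omega⟩ with hbF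
  set aF : Fin n := ⟨0, by omega⟩ with haF
  have hba : bF ≠ aF := by
    intro h; rw [hbF, haF, Fin.mk.injEq] at h; omega
  constructor
  · rw [hgl.R_eq]
    exact Finset.mem_image.mpr ⟨(bF, aF),
      Finset.mem_offDiag.mpr ⟨Finset.mem_univ _, Finset.mem_univ _, hba⟩, rfl⟩
  · intro γ hγ hpre
    obtain ⟨c, hc⟩ := hpre
    rw [hgl.R_eq] at hγ
    obtain ⟨q, hq, rfl⟩ := Finset.mem_image.mp hγ
    have hqne : q.1 ≠ q.2 := (Finset.mem_offDiag.mp hq).2.2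
    rw [hgl.Pi_eq, Finset.sum_image (gln_eN_sub_inj n)] at hc
    -- evaluate with glnPhi t
    have hkey : ∀ t, t < n - 1 → ((q.2 : ℕ) ≤ t ∧ ¬ ((q.1 : ℕ) ≤ t)) := by
      intro t ht
      have heval := congrArg (glnPhi t) hc
      simp only [glnPhi_sub, glnPhi_stdE, glnPhi_sum] at heval
      have hterm : ∀ j ∈ Finset.range (n-1),
          glnPhi t ((c (eN n j - eN n (j+1)) : ℤ) • (eN n j - eN n (j+1)))
          = (c (eN n j - eN n (j+1)) : ℤ) * ((if j ≤ t then 1 else 0) - (if j+1 ≤ t then 1 else 0)) := by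
        intro j hj
        rw [Finset.mem_range] at hj
        rw [glnPhi_smul, glnPhi_sub, glnPhi_eN t (show j < n by omega),
          glnPhi_eN t (show j + 1 < n by omega)]
      rw [Finset.sum_congr rfl hterm] at heval
      rw [Finset.sum_eq_single t ?h1 ?h2] at heval
      case h1 =>
        intro j hj hjne
        split_ifs with hx hy hy
        · ring
        · exfalso; omega
        · exfalso
          rw [Finset.mem_range] at hj
          omega
        · ring
      case h2 =>
        intro habs
        exact absurd (Finset.mem_range.mpr ht) habs
      have hnn : (0 : ℤ) ≤ (c (eN n t - eN n (t+1)) : ℤ) := Int.natCast_nonneg _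
      have e1 : ¬ (t + 1 ≤ t) := by omega
      have e2 : ¬ ((n - 1 : ℕ) ≤ t) := by omega
      constructor
      · by_contra hcon
        by_cases h1 : (q.1 : ℕ) ≤ t <;>
          simp [h1, hcon, e1, e2, hbF, haF] at heval <;>
          omega
      · intro hcon
        by_cases h2' : (q.2 : ℕ) ≤ t <;>
          simp [h2', hcon, e1, e2, hbF, haF] at heval <;>
          omega
    have h0 := hkey 0 (by omega)
    have h1 := hkey (n-2) (by omega)
    have hq1 : (q.1 : ℕ) = n - 1 := by
      have := q.1.isLt
      omega
    have hq2 : (q.2 : ℕ) = 0 := by omega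
    have e1 : q.1 = bF := by
      rw [hbF]
      exact Fin.ext hq1
    have e2 : q.2 = aF := by
      rw [haF]
      exact Fin.ext hq2
    rw [e1, e2]

lemma gln_gen0_mem_Sa (hgl : IsGLn n S) (h2 : 2 ≤ n) :
    glnGen0 S h2 ∈ S.Sa := by
  apply Set.mem_union_right
  refine ⟨stdE n ⟨n-1, by omega⟩ - stdE n ⟨0, by omega⟩, gln_lowest_mem_Pim S hgl h2, ?_⟩
  have hne : (⟨n-1, by omega⟩ : Fin n) ≠ (⟨0, by omega⟩ : Fin n) := by
    intro h; rw [Fin.mk.injEq] at h; omega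
  show S.t (-S.coroot (stdE n ⟨n-1, by omega⟩ - stdE n ⟨0, by omega⟩)) *
      S.emb (S.sref (stdE n ⟨n-1, by omega⟩ - stdE n ⟨0, by omega⟩)) = glnGen0 S h2
  rw [hgl.coroot_eq _ _ hne, hgl.sref_eq _ _ hne]
  unfold glnGen0
  rw [neg_sub, Equiv.swap_comm]

lemma gln_gen_mem_Sa (hgl : IsGLn n S) {p : Wt} (hp : glnIsGen S p) : p ∈ S.Sa := by
  rcases hp with ⟨k, hk, rfl⟩ | ⟨h2, rfl⟩
  · exact gln_genS_mem_Sa S hgl k hk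
  · exact gln_gen0_mem_Sa S hgl h2

end GlnAux7

section GlnAux8
open AffineWeylSetup HeckeAlg

variable {n : ℕ} {Wt : Type} [Group Wt]
variable (S : AffineWeylSetup (Fin n → ℤ) (Fin n → ℤ) (Equiv.Perm (Fin n)) Wt)
variable {H : Type} [Ring H] [Algebra HckA H]

lemma gln_Tt_unit (hh : HeckeAlg S H) (g : Wt) : IsUnit (hh.Tt g) := by
  unfold HeckeAlg.Tt
  rw [Algebra.smul_def]
  exact IsUnit.mul (IsUnit.map (algebraMap HckA H) (LaurentPolynomial.isUnit_T _)) (hh.T_unit g)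

lemma gln_Tt_mul (hh : HeckeAlg S H) (g g' : Wt)
    (h : S.len (g * g') = S.len g + S.len g') :
    hh.Tt g * hh.Tt g' = hh.Tt (g * g') := by
  unfold HeckeAlg.Tt
  have he : (LaurentPolynomial.T (-(S.len g : ℤ)) : HckA) * LaurentPolynomial.T (-(S.len g' : ℤ))
      = LaurentPolynomial.T (-(S.len (g * g') : ℤ)) := by
    rw [← LaurentPolynomial.T_add]
    congr 1
    rw [h]
    push_cast
    ring
  rw [smul_mul_assoc, mul_smul_comm, smul_smul, he, hh.T_mul g g' h]

lemma gln_Tt_inv_mul (hh : HeckeAlg S H) (p h' : Wt) (hlen1 : S.len p = 1)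
    (hsq : p * p = 1) (hdown : S.len (p * h') + 1 = S.len h') :
    Ring.inverse (hh.Tt p) * hh.Tt h' = hh.Tt (p * h') := by
  have hpp : p * (p * h') = h' := by rw [← mul_assoc, hsq, one_mul]
  have hadd : S.len (p * (p * h')) = S.len p + S.len (p * h') := by
    rw [hpp, hlen1]
    omega
  have hmul : hh.Tt p * hh.Tt (p * h') = hh.Tt h' := by
    rw [gln_Tt_mul S hh _ _ hadd, hpp]
  rw [← hmul, ← mul_assoc, Ring.inverse_mul_cancel _ (gln_Tt_unit S hh p), one_mul]

lemma gln_len_zero_mul_elt (hgl : IsGLn n S) (τ g : Wt) (hτ : S.len τ = 0) :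
    S.len (τ * g) = S.len g := by
  have h1 : τ * g = S.t (S.lam τ + S.act (S.fpart τ) (S.lam g)) * S.emb (S.fpart τ * S.fpart g) := by
    conv_lhs => rw [S.decomp τ, S.decomp g]
    rw [gln_te_mul]
  rw [h1, gln_len_te S hgl, gln_len_eq S hgl g]
  have hx : (S.lam τ + S.act (S.fpart τ) (S.lam g))
      = fun i => S.lam τ i + S.lam g ((S.fpart τ)⁻¹ i) := by
    funext i
    simp [hgl.act_eq]
  rw [hx]
  apply gln_len_zero_mul
  rw [← gln_len_eq S hgl τ]
  exact hτ

lemma gln_chain (hgl : IsGLn n S) (hh : HeckeAlg S H) :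
    ∀ (L : List Wt), (∀ p ∈ L, glnIsGen S p) → ∀ h : Wt,
    ∃ P : List (Wt × Bool), P.map Prod.fst = L ∧
      (P.map (fun pr => if pr.2 then hh.Tt pr.1 else Ring.inverse (hh.Tt pr.1))).prod * hh.Tt h
        = hh.Tt (L.prod * h) := by
  intro L
  induction L with
  | nil =>
    intro _ h
    refine ⟨[], rfl, by simp⟩
  | cons p L ih =>
    intro hmem h
    obtain ⟨P, hP1, hP2⟩ := ih (fun q hq => hmem q (List.mem_cons_of_mem p hq)) h
    have hpgen := hmem p (List.mem_cons_self (a := p) (l := L))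
    have hgoalprod : (p :: L).prod * h = p * (L.prod * h) := by
      rw [List.prod_cons, mul_assoc]
    rcases gln_gen_pm S hgl hpgen (L.prod * h) with hdown | hup
    · refine ⟨(p, false) :: P, by simp [hP1], ?_⟩
      rw [List.map_cons, List.prod_cons, mul_assoc, hP2, hgoalprod]
      exact gln_Tt_inv_mul S hh p (L.prod * h) (gln_gen_len_one S hgl hpgen)
        (gln_gen_sq S hgl hpgen) hdown
    · refine ⟨(p, true) :: P, by simp [hP1], ?_⟩
      rw [List.map_cons, List.prod_cons, mul_assoc, hP2, hgoalprod]
      simp only [if_pos]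
      refine gln_Tt_mul S hh p (L.prod * h) ?_
      rw [hup, gln_gen_len_one S hgl hpgen]
      omega

end GlnAux8

open AffineWeylSetup HeckeAlg in
/-- **Section 5.** For every coweight `λ` of `GL_n`, `Θ⁻_λ` has a minimal expression:
`Θ⁻_λ = T̃_{t_1}^{ε_1} ⋯ T̃_{t_r}^{ε_r} T̃_τ` for some reduced expression
`t_λ = t_1 ⋯ t_r τ` (`t_i ∈ S_a`, `τ ∈ Ω`) and signs `ε_i ∈ {1, -1}`. -/
theorem gln_minimal_expression
    {Wt H : Type} [Group Wt] [Ring H] [Algebra HckA H]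
    (n : ℕ)
    (S : AffineWeylSetup (Fin n → ℤ) (Fin n → ℤ) (Equiv.Perm (Fin n)) Wt)
    (hgl : IsGLn n S) (hh : HeckeAlg S H)
    (lam l1 l2 : Fin n → ℤ) (h1 : S.Antidominant l1) (h2 : S.Antidominant l2)
    (hdec : lam = l1 - l2) :
    ∃ (P : List (Wt × Bool)) (τ : Wt),
      S.IsReducedWord (P.map Prod.fst) τ (S.t lam) ∧
      hh.ThetaAnti l1 l2 =
        (P.map (fun pr => if pr.2 then hh.Tt pr.1 else Ring.inverse (hh.Tt pr.1))).prod *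
          hh.Tt τ := by
  obtain ⟨L, τ, hLgen, hτ, hprod, hlen⟩ :=
    gln_word_exists S hgl (S.len (S.t lam)) (S.t lam) (le_refl _)
  obtain ⟨P, hPfst, hPeq⟩ := gln_chain S hgl hh L hLgen (τ * S.t l2)
  have hbase : hh.Tt τ * hh.Tt (S.t l2) = hh.Tt (τ * S.t l2) := by
    refine gln_Tt_mul S hh τ (S.t l2) ?_
    rw [gln_len_zero_mul_elt S hgl τ (S.t l2) hτ, hτ, zero_add]
  have hfull : L.prod * (τ * S.t l2) = S.t l1 := by
    rw [← mul_assoc, ← hprod, ← S.t_add]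
    congr 1
    rw [hdec, sub_add_cancel]
  have hkey : hh.Tt (S.t l1)
      = (P.map (fun pr => if pr.2 then hh.Tt pr.1 else Ring.inverse (hh.Tt pr.1))).prod
        * hh.Tt τ * hh.Tt (S.t l2) := by
    rw [mul_assoc, hbase, hPeq, hfull]
  refine ⟨P, τ, ⟨?_, hτ, ?_, ?_⟩, ?_⟩
  · rw [hPfst]
    intro s hs
    exact gln_gen_mem_Sa S hgl (hLgen s hs)
  · rw [hPfst]
    exact hprod
  · rw [hPfst]
    exact hlen
  · unfold HeckeAlg.ThetaAnti
    rw [hkey, mul_assoc, Ring.mul_inverse_cancel _ (gln_Tt_unit S hh (S.t l2)), mul_one]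
end
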